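/- Let n ≥ 1 and let J be an integer with 0 ≤ 2J ≤ n and 2J ≡ n (mod 2); set m = n − 2J. Then for all 0 ≤ k, l ≤ 2J: ⟨ξ_{k,J}| S_{xz} |ξ_{l,J}⟩ = (2J−1−2l)·√((2J−l)(l+1))·δ(k−l−1) + (2J−1−2k)·√((2J−k)(k+1))·δ(l−k−1); ⟨ξ_{k,J}| S_{yz} |ξ_{l,J}⟩ = i·sgn(k−l)·[(2J−1−2l)·√((2J−l)(l+1))·δ(k−l−1) + (2J−1−2k)·√((2J−k)(k+1))·δ(l−k−1)]; and ⟨ξ_{k,J}| S_{xy} |ξ_{l,J}⟩ = i·sgn(k−l)·[√((l+1)(l+2)(2J−l)(2J−l−1))·δ(k−l−2) + √((k+1)(k+2)(2J−k)(2J−k−1))·δ(l−k−2)]. -/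

import Mathlib

noncomputable section

open scoped ComplexConjugate

/-- Operators on `n` qubits: `2ⁿ × 2ⁿ` complex matrices indexed by bitstrings. -/
abbrev QOp (n : ℕ) := Matrix (Fin n → Fin 2) (Fin n → Fin 2) ℂ

/-- The single-qubit operator `M` acting on the `i`-th tensor factor and as the
identity on all the other factors. -/
def onQubit (n : ℕ) (i : Fin n) (M : Matrix (Fin 2) (Fin 2) ℂ) : QOp n :=
  Matrix.of fun f g =>
    M (f i) (g i) * ∏ j ∈ Finset.univ.erase i, (if f j = g j then (1 : ℂ) else 0)

/-- The collective operator `S_M = Σᵢ M⁽ⁱ⁾`. -/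
def collS (n : ℕ) (M : Matrix (Fin 2) (Fin 2) ℂ) : QOp n := ∑ i : Fin n, onQubit n i M

/-- The collective two-body operator `S_{MN} = Σ_{i≠j} M⁽ⁱ⁾ N⁽ʲ⁾`. -/
def collSS (n : ℕ) (M N : Matrix (Fin 2) (Fin 2) ℂ) : QOp n :=
  ∑ i : Fin n, ∑ j ∈ Finset.univ.erase i, onQubit n i M * onQubit n j N

def pauliX : Matrix (Fin 2) (Fin 2) ℂ := !![0, 1; 1, 0]
def pauliY : Matrix (Fin 2) (Fin 2) ℂ := !![0, -Complex.I; Complex.I, 0]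
def pauliZ : Matrix (Fin 2) (Fin 2) ℂ := !![1, 0; 0, -1]

/-- The matrix element `⟨ψ| A |φ⟩`. -/
def braket {n : ℕ} (ψ : (Fin n → Fin 2) → ℂ) (A : QOp n) (φ : (Fin n → Fin 2) → ℂ) : ℂ :=
  ∑ f : Fin n → Fin 2, ∑ g : Fin n → Fin 2, conj (ψ f) * A f g * φ g

/-- Kronecker delta `δ(a)` on the integers, valued in `ℂ`. -/
def kdel (a : ℤ) : ℂ := if a = 0 then 1 else 0

/-- Extend a bitstring on `Fin n` to all of `ℕ` by zeros. -/
def extendBits (n : ℕ) (f : Fin n → Fin 2) : ℕ → Fin 2 :=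
  fun m => if h : m < n then f ⟨m, h⟩ else 0

/-- Amplitudes of the two-qubit singlet state `(|01⟩ − |10⟩)/√2`. -/
def singletAmp (x y : Fin 2) : ℂ :=
  (((if x = 0 ∧ y = 1 then 1 else 0) - (if x = 1 ∧ y = 0 then 1 else 0)) : ℂ)
    / ((Real.sqrt 2 : ℝ) : ℂ)

/-- The state `|ξ_{k,J}⟩ = |D^k_{2J}⟩ ⊗ |ψ⁻⟩^{⊗(n−2J)/2}`: the symmetric Dicke state with
`k` excitations on the first `2J` qubits, tensored with singlets on the remaining
`n − 2J` qubits (paired consecutively). -/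
def xiState (n J k : ℕ) : (Fin n → Fin 2) → ℂ := fun f =>
  (if ((Finset.range (2 * J)).filter fun m => extendBits n f m = 1).card = k
      then (((Real.sqrt ((2 * J).choose k) : ℝ) : ℂ))⁻¹ else 0) *
  ∏ a ∈ Finset.range ((n - 2 * J) / 2),
    singletAmp (extendBits n f (2 * J + 2 * a)) (extendBits n f (2 * J + 2 * a + 1))

namespace S9
variable {n : ℕ}

def zsgn (x : Fin 2) : ℂ := if x = 0 then 1 else -1

lemma braket_sum {ι : Type*} (s : Finset ι) (ψ φ : (Fin n → Fin 2) → ℂ) (A : ι → QOp n) :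
    braket ψ (∑ i ∈ s, A i) φ = ∑ i ∈ s, braket ψ (A i) φ := by
  unfold braket
  simp only [Matrix.sum_apply, Finset.mul_sum, Finset.sum_mul]
  trans ∑ f : Fin n → Fin 2, ∑ i ∈ s, ∑ g : Fin n → Fin 2, conj (ψ f) * A i f g * φ g
  · exact Finset.sum_congr rfl fun f _ => Finset.sum_comm
  · exact Finset.sum_comm

lemma sum_update_one (f : Fin n → Fin 2) (i : Fin n) (F : Fin 2 → ℂ) (G : (Fin n → Fin 2) → ℂ) :
    ∑ h : Fin n → Fin 2,
        (F (h i) * ∏ m ∈ Finset.univ.erase i, (if f m = h m then (1:ℂ) else 0)) * G h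
      = ∑ a : Fin 2, F a * G (Function.update f i a) := by
  have key : ∀ h : Fin n → Fin 2,
      (F (h i) * ∏ m ∈ Finset.univ.erase i, (if f m = h m then (1:ℂ) else 0)) * G h
      = if h = Function.update f i (h i) then F (h i) * G h else 0 := by
    intro h
    by_cases hh : h = Function.update f i (h i)
    · rw [if_pos hh]
      have h1 : ∀ m ∈ Finset.univ.erase i, (if f m = h m then (1:ℂ) else 0) = 1 := by
        intro m hm
        have hmi := Finset.ne_of_mem_erase hm
        rw [if_pos]
        conv_rhs => rw [hh]
        rw [Function.update_of_ne hmi]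
      rw [Finset.prod_congr rfl h1, Finset.prod_const_one, mul_one]
    · rw [if_neg hh]
      have h2 : ∃ m, m ≠ i ∧ f m ≠ h m := by
        by_contra hcon; push_neg at hcon
        apply hh; funext m
        by_cases hmi : m = i
        · subst hmi; simp
        · rw [Function.update_of_ne hmi]; exact (hcon m hmi).symm
      obtain ⟨m, hmi, hfm⟩ := h2
      have h3 : (∏ m ∈ Finset.univ.erase i, (if f m = h m then (1:ℂ) else 0)) = 0 :=
        Finset.prod_eq_zero (Finset.mem_erase.mpr ⟨hmi, Finset.mem_univ m⟩) (if_neg hfm)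
      rw [h3]; ring
  rw [Finset.sum_congr rfl fun h _ => key h]
  symm
  calc ∑ a : Fin 2, F a * G (Function.update f i a)
      = ∑ a : Fin 2, F ((Function.update f i a) i) * G (Function.update f i a) := by simp
    _ = ∑ h ∈ Finset.univ.image (fun a => Function.update f i a), F (h i) * G h :=
        (Finset.sum_image (f := fun h => F (h i) * G h)
          (g := fun a => Function.update f i a)
          fun a _ b _ hab => by simpa using congrFun hab i).symm
    _ = ∑ h ∈ Finset.univ.image (fun a => Function.update f i a),
          (if h = Function.update f i (h i) then F (h i) * G h else 0) := by
        refine Finset.sum_congr rfl fun h hm => ?_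
        obtain ⟨a, _, rfl⟩ := Finset.mem_image.mp hm
        rw [if_pos (by simp)]
    _ = ∑ h : Fin n → Fin 2, (if h = Function.update f i (h i) then F (h i) * G h else 0) := by
        refine Finset.sum_subset (Finset.subset_univ _) fun h _ hh => ?_
        refine if_neg fun hc => hh ?_
        exact Finset.mem_image.mpr ⟨h i, Finset.mem_univ _, hc.symm⟩

lemma sum_update_two (f : Fin n → Fin 2) (i j : Fin n) (hij : i ≠ j) (F : Fin 2 → Fin 2 → ℂ)
    (G : (Fin n → Fin 2) → ℂ) :
    ∑ g : Fin n → Fin 2,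
        (F (g i) (g j) * ∏ m ∈ (Finset.univ.erase i).erase j, (if f m = g m then (1:ℂ) else 0)) * G g
      = ∑ a : Fin 2, ∑ b : Fin 2, F a b * G (Function.update (Function.update f i a) j b) := by
  have hval : ∀ a b : Fin 2, (Function.update (Function.update f i a) j b) i = a ∧
      (Function.update (Function.update f i a) j b) j = b := by
    intro a b
    constructor
    · rw [Function.update_of_ne hij, Function.update_self]
    · rw [Function.update_self]
  have key : ∀ g : Fin n → Fin 2,
      (F (g i) (g j) * ∏ m ∈ (Finset.univ.erase i).erase j, (if f m = g m then (1:ℂ) else 0)) * G g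
      = if g = Function.update (Function.update f i (g i)) j (g j) then F (g i) (g j) * G g else 0 := by
    intro g
    by_cases hh : g = Function.update (Function.update f i (g i)) j (g j)
    · rw [if_pos hh]
      have h1 : ∀ m ∈ (Finset.univ.erase i).erase j, (if f m = g m then (1:ℂ) else 0) = 1 := by
        intro m hm
        have hmj := Finset.ne_of_mem_erase hm
        have hmi := Finset.ne_of_mem_erase (Finset.mem_of_mem_erase hm)
        rw [if_pos]
        conv_rhs => rw [hh]
        rw [Function.update_of_ne hmj, Function.update_of_ne hmi]
      rw [Finset.prod_congr rfl h1, Finset.prod_const_one, mul_one]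
    · rw [if_neg hh]
      have h2 : ∃ m, m ≠ j ∧ m ≠ i ∧ f m ≠ g m := by
        by_contra hcon; push_neg at hcon
        apply hh; funext m
        by_cases hmj : m = j
        · subst hmj; simp
        · by_cases hmi : m = i
          · subst hmi
            exact ((hval (g m) (g j)).1).symm
          · rw [Function.update_of_ne hmj, Function.update_of_ne hmi]
            exact (hcon m hmj hmi).symm
      obtain ⟨m, hmj, hmi, hfm⟩ := h2
      have h3 : (∏ m ∈ (Finset.univ.erase i).erase j, (if f m = g m then (1:ℂ) else 0)) = 0 :=
        Finset.prod_eq_zero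
          (Finset.mem_erase.mpr ⟨hmj, Finset.mem_erase.mpr ⟨hmi, Finset.mem_univ m⟩⟩) (if_neg hfm)
      rw [h3]; ring
  rw [Finset.sum_congr rfl fun g _ => key g]
  symm
  rw [show (∑ a : Fin 2, ∑ b : Fin 2, F a b * G (Function.update (Function.update f i a) j b))
      = ∑ p : Fin 2 × Fin 2, F p.1 p.2 * G (Function.update (Function.update f i p.1) j p.2) from
    (Fintype.sum_prod_type fun p : Fin 2 × Fin 2 =>
      F p.1 p.2 * G (Function.update (Function.update f i p.1) j p.2)).symm]
  calc ∑ p : Fin 2 × Fin 2, F p.1 p.2 * G (Function.update (Function.update f i p.1) j p.2)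
      = ∑ p : Fin 2 × Fin 2,
          (fun g => F (g i) (g j) * G g) (Function.update (Function.update f i p.1) j p.2) := by
        refine Finset.sum_congr rfl fun p _ => ?_
        simp only [(hval p.1 p.2).1, (hval p.1 p.2).2]
    _ = ∑ h ∈ Finset.univ.image (fun p : Fin 2 × Fin 2 =>
          Function.update (Function.update f i p.1) j p.2), F (h i) (h j) * G h := by
        refine (Finset.sum_image (f := fun h => F (h i) (h j) * G h)
          (g := fun p : Fin 2 × Fin 2 => Function.update (Function.update f i p.1) j p.2)
          fun p _ q _ hab => ?_).symm
        have h1 := congrFun hab i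
        have h2 := congrFun hab j
        simp only at h1 h2
        rw [(hval p.1 p.2).1, (hval q.1 q.2).1] at h1
        rw [(hval p.1 p.2).2, (hval q.1 q.2).2] at h2
        exact Prod.ext h1 h2
    _ = ∑ h ∈ Finset.univ.image (fun p : Fin 2 × Fin 2 =>
          Function.update (Function.update f i p.1) j p.2),
          (if h = Function.update (Function.update f i (h i)) j (h j)
            then F (h i) (h j) * G h else 0) := by
        refine Finset.sum_congr rfl fun h hm => ?_
        obtain ⟨p, _, rfl⟩ := Finset.mem_image.mp hm
        rw [if_pos (by rw [(hval p.1 p.2).1, (hval p.1 p.2).2])]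
    _ = ∑ g : Fin n → Fin 2, (if g = Function.update (Function.update f i (g i)) j (g j)
          then F (g i) (g j) * G g else 0) := by
        refine Finset.sum_subset (Finset.subset_univ _) fun h _ hh => ?_
        refine if_neg fun hc => hh ?_
        exact Finset.mem_image.mpr ⟨(h i, h j), Finset.mem_univ _, hc.symm⟩

lemma braket_pair (i j : Fin n) (hij : i ≠ j) (M N : Matrix (Fin 2) (Fin 2) ℂ)
    (ψ φ : (Fin n → Fin 2) → ℂ) :
    braket ψ (onQubit n i M * onQubit n j N) φ
      = ∑ f : Fin n → Fin 2, ∑ a : Fin 2, ∑ b : Fin 2,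
          conj (ψ f) * (M (f i) a * N (f j) b) *
            φ (Function.update (Function.update f i a) j b) := by
  have entry : ∀ f g : Fin n → Fin 2, (onQubit n i M * onQubit n j N) f g
      = (M (f i) (g i) * N (f j) (g j)) *
        ∏ m ∈ (Finset.univ.erase i).erase j, (if f m = g m then (1:ℂ) else 0) := by
    intro f g
    rw [Matrix.mul_apply]
    simp only [onQubit, Matrix.of_apply]
    have := sum_update_one f i (fun a => M (f i) a)
      (fun h => N (h j) (g j) * ∏ m ∈ Finset.univ.erase j, (if h m = g m then (1:ℂ) else 0))
    rw [show (∑ h : Fin n → Fin 2, (M (f i) (h i) *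
          ∏ m ∈ Finset.univ.erase i, (if f m = h m then (1:ℂ) else 0)) *
          (N (h j) (g j) * ∏ m ∈ Finset.univ.erase j, (if h m = g m then (1:ℂ) else 0))) =
        ∑ a : Fin 2, M (f i) a * (N ((Function.update f i a) j) (g j) *
          ∏ m ∈ Finset.univ.erase j, (if (Function.update f i a) m = g m then (1:ℂ) else 0))
      from this]
    have hi_mem : i ∈ Finset.univ.erase j := Finset.mem_erase.mpr ⟨hij, Finset.mem_univ i⟩
    calc ∑ a : Fin 2, M (f i) a * (N ((Function.update f i a) j) (g j) *
          ∏ m ∈ Finset.univ.erase j, (if (Function.update f i a) m = g m then (1:ℂ) else 0))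
        = ∑ a : Fin 2, M (f i) a * (N (f j) (g j) *
            ((if a = g i then (1:ℂ) else 0) *
             ∏ m ∈ (Finset.univ.erase j).erase i, (if f m = g m then (1:ℂ) else 0))) := by
          refine Finset.sum_congr rfl fun a _ => ?_
          rw [Function.update_of_ne (Ne.symm hij), ← Finset.mul_prod_erase _ _ hi_mem,
            Function.update_self]
          congr 1
          congr 1
          congr 1
          refine Finset.prod_congr rfl fun m hm => ?_
          rw [Function.update_of_ne (Finset.ne_of_mem_erase hm)]
      _ = (M (f i) (g i) * N (f j) (g j)) *
            ∏ m ∈ (Finset.univ.erase i).erase j, (if f m = g m then (1:ℂ) else 0) := by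
          rw [Fin.sum_univ_two]
          rw [Finset.erase_right_comm]
          rcases (show ∀ x : Fin 2, x = 0 ∨ x = 1 by decide) (g i) with h | h <;> rw [h] <;>
            norm_num <;> ring
  unfold braket
  refine Finset.sum_congr rfl fun f _ => ?_
  simp only [entry]
  have := sum_update_two f i j hij (fun a b => M (f i) a * N (f j) b)
    (fun g => φ g)
  calc ∑ g : Fin n → Fin 2, conj (ψ f) * ((M (f i) (g i) * N (f j) (g j)) *
        ∏ m ∈ (Finset.univ.erase i).erase j, (if f m = g m then (1:ℂ) else 0)) * φ g
      = conj (ψ f) * ∑ g : Fin n → Fin 2, ((M (f i) (g i) * N (f j) (g j)) *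
          ∏ m ∈ (Finset.univ.erase i).erase j, (if f m = g m then (1:ℂ) else 0)) * φ g := by
        rw [Finset.mul_sum]; refine Finset.sum_congr rfl fun g _ => ?_; ring
    _ = conj (ψ f) * ∑ a : Fin 2, ∑ b : Fin 2, (M (f i) a * N (f j) b) *
          φ (Function.update (Function.update f i a) j b) := by rw [this]
    _ = _ := by
        rw [Finset.mul_sum]; refine Finset.sum_congr rfl fun a _ => ?_
        rw [Finset.mul_sum]; refine Finset.sum_congr rfl fun b _ => ?_; ring

end S9

namespace S9
variable {n : ℕ}

lemma rev0 : (0 : Fin 2).rev = 1 := rfl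
lemma rev1 : (1 : Fin 2).rev = 0 := rfl

lemma pX : ∀ x a : Fin 2, pauliX x a = if a = x.rev then 1 else 0 := by
  intro x a; fin_cases x <;> fin_cases a <;> simp [pauliX, rev0, rev1, Fin.last]

lemma pY : ∀ x a : Fin 2, pauliY x a = if a = x.rev then -Complex.I * zsgn x else 0 := by
  intro x a; fin_cases x <;> fin_cases a <;> simp [pauliY, zsgn, rev0, rev1, Fin.last]

lemma pZ : ∀ x a : Fin 2, pauliZ x a = if a = x then zsgn x else 0 := by
  intro x a; fin_cases x <;> fin_cases a <;> simp [pauliZ, zsgn, rev0, rev1, Fin.last]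

lemma upd_j_self (i j : Fin n) (hij : i ≠ j) (f : Fin n → Fin 2) (a : Fin 2) :
    Function.update (Function.update f i a) j (f j) = Function.update f i a := by
  have h : f j = (Function.update f i a) j := (Function.update_of_ne (Ne.symm hij) _ _).symm
  rw [h, Function.update_eq_self]

lemma collapse_ab (c : Fin 2 → ℂ) (r : Fin 2) (s : Fin 2) (T : Fin 2 → Fin 2 → ℂ) :
    (∑ a : Fin 2, ∑ b : Fin 2,
        (if a = r then (1:ℂ) else 0) * ((if b = s then c b else 0) * T a b)) = c s * T r s := by
  fin_cases r <;> fin_cases s <;> simp [Fin.sum_univ_two]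

lemma braket_XZ (i j : Fin n) (hij : i ≠ j) (ψ φ : (Fin n → Fin 2) → ℂ) :
    braket ψ (onQubit n i pauliX * onQubit n j pauliZ) φ
      = ∑ f : Fin n → Fin 2, conj (ψ f) * zsgn (f j) * φ (Function.update f i (f i).rev) := by
  rw [braket_pair i j hij]
  refine Finset.sum_congr rfl fun f _ => ?_
  calc ∑ a : Fin 2, ∑ b : Fin 2, conj (ψ f) * (pauliX (f i) a * pauliZ (f j) b) *
        φ (Function.update (Function.update f i a) j b)
      = ∑ a : Fin 2, ∑ b : Fin 2, (if a = (f i).rev then (1:ℂ) else 0) *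
          ((if b = f j then zsgn (f j) else 0) *
            (conj (ψ f) * φ (Function.update (Function.update f i a) j b))) := by
        refine Finset.sum_congr rfl fun a _ => Finset.sum_congr rfl fun b _ => ?_
        rw [pX, pZ]
        rcases (show ∀ x : Fin 2, x = 0 ∨ x = 1 by decide) (f j) with h | h <;> rw [h] <;> ring_nf <;>
          simp [zsgn] <;> ring
    _ = zsgn (f j) * (conj (ψ f) * φ (Function.update (Function.update f i (f i).rev) j (f j))) := by
        rw [collapse_ab (fun _ => zsgn (f j)) ((f i).rev) (f j)
          (fun a b => conj (ψ f) * φ (Function.update (Function.update f i a) j b))]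
    _ = conj (ψ f) * zsgn (f j) * φ (Function.update f i (f i).rev) := by
        rw [upd_j_self i j hij]; ring

lemma braket_YZ (i j : Fin n) (hij : i ≠ j) (ψ φ : (Fin n → Fin 2) → ℂ) :
    braket ψ (onQubit n i pauliY * onQubit n j pauliZ) φ
      = ∑ f : Fin n → Fin 2, conj (ψ f) * (-Complex.I * zsgn (f i) * zsgn (f j)) *
          φ (Function.update f i (f i).rev) := by
  rw [braket_pair i j hij]
  refine Finset.sum_congr rfl fun f _ => ?_
  calc ∑ a : Fin 2, ∑ b : Fin 2, conj (ψ f) * (pauliY (f i) a * pauliZ (f j) b) *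
        φ (Function.update (Function.update f i a) j b)
      = ∑ a : Fin 2, ∑ b : Fin 2, (if a = (f i).rev then (1:ℂ) else 0) *
          ((if b = f j then zsgn (f j) else 0) *
            (conj (ψ f) * (-Complex.I * zsgn (f i)) *
              φ (Function.update (Function.update f i a) j b))) := by
        refine Finset.sum_congr rfl fun a _ => Finset.sum_congr rfl fun b _ => ?_
        rw [pY, pZ]
        by_cases h1 : a = (f i).rev <;> by_cases h2 : b = f j <;>
          simp [h1, h2] <;> ring
    _ = zsgn (f j) * (conj (ψ f) * (-Complex.I * zsgn (f i)) *
          φ (Function.update (Function.update f i (f i).rev) j (f j))) := by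
        rw [collapse_ab (fun _ => zsgn (f j)) ((f i).rev) (f j)
          (fun a b => conj (ψ f) * (-Complex.I * zsgn (f i)) *
            φ (Function.update (Function.update f i a) j b))]
    _ = _ := by rw [upd_j_self i j hij]; ring

lemma braket_XY (i j : Fin n) (hij : i ≠ j) (ψ φ : (Fin n → Fin 2) → ℂ) :
    braket ψ (onQubit n i pauliX * onQubit n j pauliY) φ
      = ∑ f : Fin n → Fin 2, conj (ψ f) * (-Complex.I * zsgn (f j)) *
          φ (Function.update (Function.update f i (f i).rev) j (f j).rev) := by
  rw [braket_pair i j hij]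
  refine Finset.sum_congr rfl fun f _ => ?_
  calc ∑ a : Fin 2, ∑ b : Fin 2, conj (ψ f) * (pauliX (f i) a * pauliY (f j) b) *
        φ (Function.update (Function.update f i a) j b)
      = ∑ a : Fin 2, ∑ b : Fin 2, (if a = (f i).rev then (1:ℂ) else 0) *
          ((if b = (f j).rev then -Complex.I * zsgn (f j) else 0) *
            (conj (ψ f) *
              φ (Function.update (Function.update f i a) j b))) := by
        refine Finset.sum_congr rfl fun a _ => Finset.sum_congr rfl fun b _ => ?_
        rw [pX, pY]
        by_cases h1 : a = (f i).rev <;> by_cases h2 : b = (f j).rev <;>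
          simp [h1, h2] <;> ring
    _ = (-Complex.I * zsgn (f j)) * (conj (ψ f) *
          φ (Function.update (Function.update f i (f i).rev) j (f j).rev)) := by
        rw [collapse_ab (fun _ => -Complex.I * zsgn (f j)) ((f i).rev) ((f j).rev)
          (fun a b => conj (ψ f) * φ (Function.update (Function.update f i a) j b))]
    _ = _ := by ring

end S9

namespace S9
variable {p : ℕ}

def lo (p : ℕ) (t : Fin p) : Fin (2*p) := ⟨2*t.1, by have := t.2; omega⟩
def hi (p : ℕ) (t : Fin p) : Fin (2*p) := ⟨2*t.1+1, by have := t.2; omega⟩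
def pt (p : ℕ) (q : Fin (2*p)) : Fin p := ⟨q.1/2, by have := q.2; omega⟩

def sing (p : ℕ) (v : Fin (2*p) → Fin 2) : ℂ :=
  ∏ t : Fin p, singletAmp (v (lo p t)) (v (hi p t))

def pairE (p : ℕ) : (Fin p → Fin 2 × Fin 2) ≃ (Fin (2*p) → Fin 2) where
  toFun w := fun x => if x.1 % 2 = 0 then (w (pt p x)).1 else (w (pt p x)).2
  invFun v := fun t => (v (lo p t), v (hi p t))
  left_inv w := by
    funext t
    have h1 : pt p (lo p t) = t := by apply Fin.ext; simp only [pt, lo]; omega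
    have h2 : pt p (hi p t) = t := by apply Fin.ext; simp only [pt, hi]; omega
    show (if (2*t.1) % 2 = 0 then (w (pt p (lo p t))).1 else (w (pt p (lo p t))).2,
          if (2*t.1+1) % 2 = 0 then (w (pt p (hi p t))).1 else (w (pt p (hi p t))).2) = w t
    rw [if_pos (by omega), if_neg (by omega), h1, h2]
  right_inv v := by
    funext x
    show (if x.1 % 2 = 0 then v (lo p (pt p x)) else v (hi p (pt p x))) = v x
    by_cases h : x.1 % 2 = 0
    · rw [if_pos h]; congr 1; apply Fin.ext; simp only [lo, pt]; omega
    · rw [if_neg h]; congr 1; apply Fin.ext; simp only [hi, pt]; omega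

lemma sing_pair_sum (G : Fin p → Fin 2 → Fin 2 → ℂ) :
    ∑ v : Fin (2*p) → Fin 2, ∏ t : Fin p, G t (v (lo p t)) (v (hi p t))
      = ∏ t : Fin p, ∑ z : Fin 2 × Fin 2, G t z.1 z.2 := by
  rw [← Equiv.sum_comp (pairE p) (fun v => ∏ t : Fin p, G t (v (lo p t)) (v (hi p t)))]
  have hw : ∀ (w : Fin p → Fin 2 × Fin 2) (t : Fin p),
      (pairE p w (lo p t), pairE p w (hi p t)) = w t := fun w t =>
    congrFun ((pairE p).left_inv w) t
  calc ∑ w : Fin p → Fin 2 × Fin 2, ∏ t : Fin p, G t (pairE p w (lo p t)) (pairE p w (hi p t))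
      = ∑ w : Fin p → Fin 2 × Fin 2, ∏ t : Fin p, G t (w t).1 (w t).2 := by
        refine Finset.sum_congr rfl fun w _ => Finset.prod_congr rfl fun t _ => ?_
        rw [← congrArg Prod.fst (hw w t), ← congrArg Prod.snd (hw w t)]
    _ = ∏ t : Fin p, ∑ z : Fin 2 × Fin 2, G t z.1 z.2 := by
        rw [Finset.prod_univ_sum (fun _ => (Finset.univ : Finset (Fin 2 × Fin 2)))
          (fun t z => G t z.1 z.2), Fintype.piFinset_univ]

lemma sq2c : ((Real.sqrt 2 : ℝ):ℂ) * ((Real.sqrt 2 : ℝ):ℂ) = 2 := by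
  rw [← Complex.ofReal_mul, Real.mul_self_sqrt (by norm_num)]; norm_num

lemma sq2_ne : ((Real.sqrt 2 : ℝ):ℂ) ≠ 0 := by
  intro h
  rw [Complex.ofReal_eq_zero] at h
  have := Real.sqrt_pos.mpr (show (0:ℝ) < 2 by norm_num)
  linarith [this]

lemma sA00 : singletAmp 0 0 = 0 := by simp [singletAmp]
lemma sA11 : singletAmp 1 1 = 0 := by simp [singletAmp]
lemma sA01 : singletAmp 0 1 = (((Real.sqrt 2 : ℝ):ℂ))⁻¹ := by
  simp [singletAmp]
lemma sA10 : singletAmp 1 0 = -(((Real.sqrt 2 : ℝ):ℂ))⁻¹ := by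
  simp [singletAmp]; ring

lemma conj_inv_sq2 : conj ((((Real.sqrt 2 : ℝ):ℂ))⁻¹) = (((Real.sqrt 2 : ℝ):ℂ))⁻¹ := by
  rw [map_inv₀, Complex.conj_ofReal]

lemma inv_sq2_sq : (((Real.sqrt 2 : ℝ):ℂ))⁻¹ * (((Real.sqrt 2 : ℝ):ℂ))⁻¹ = 1/2 := by
  rw [← mul_inv]
  rw [sq2c]
  norm_num

-- per-pair sums
lemma pair_sum_norm : ∑ z : Fin 2 × Fin 2, conj (singletAmp z.1 z.2) * singletAmp z.1 z.2 = 1 := by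
  rw [Fintype.sum_prod_type, Fin.sum_univ_two]
  simp only [Fin.sum_univ_two, sA00, sA01, sA10, sA11, map_zero, map_neg, conj_inv_sq2]
  have := inv_sq2_sq
  ring_nf
  ring_nf at this
  rw [show ((Real.sqrt 2 : ℝ):ℂ)⁻¹ ^ 2 = ((Real.sqrt 2 : ℝ):ℂ)⁻¹ * ((Real.sqrt 2 : ℝ):ℂ)⁻¹ from sq _]
  rw [inv_sq2_sq]
  norm_num

lemma pair_sum_z1 : ∑ z : Fin 2 × Fin 2, conj (singletAmp z.1 z.2) * zsgn z.1 * singletAmp z.1 z.2 = 0 := by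
  rw [Fintype.sum_prod_type, Fin.sum_univ_two]
  simp only [Fin.sum_univ_two, sA00, sA01, sA10, sA11, map_zero, map_neg, conj_inv_sq2, zsgn]
  norm_num

lemma pair_sum_z2 : ∑ z : Fin 2 × Fin 2, conj (singletAmp z.1 z.2) * zsgn z.2 * singletAmp z.1 z.2 = 0 := by
  rw [Fintype.sum_prod_type, Fin.sum_univ_two]
  simp only [Fin.sum_univ_two, sA00, sA01, sA10, sA11, map_zero, map_neg, conj_inv_sq2, zsgn]
  norm_num

lemma pair_sum_xy1 : ∑ z : Fin 2 × Fin 2,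
    conj (singletAmp z.1 z.2) * zsgn z.2 * singletAmp z.1.rev z.2.rev = 0 := by
  rw [Fintype.sum_prod_type, Fin.sum_univ_two]
  simp only [Fin.sum_univ_two, rev0, rev1, sA00, sA01, sA10, sA11, map_zero, map_neg,
    conj_inv_sq2, zsgn]
  norm_num

lemma pair_sum_xy2 : ∑ z : Fin 2 × Fin 2,
    conj (singletAmp z.1 z.2) * zsgn z.1 * singletAmp z.1.rev z.2.rev = 0 := by
  rw [Fintype.sum_prod_type, Fin.sum_univ_two]
  simp only [Fin.sum_univ_two, rev0, rev1, sA00, sA01, sA10, sA11, map_zero, map_neg,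
    conj_inv_sq2, zsgn]
  norm_num

lemma singlet_flip_zero : ∀ x y x' y' : Fin 2,
    ((x' ≠ x ∧ y' = y) ∨ (x' = x ∧ y' ≠ y)) → conj (singletAmp x y) * singletAmp x' y' = 0 := by
  intro x y x' y' h
  fin_cases x <;> fin_cases y <;> fin_cases x' <;> fin_cases y' <;>
    simp_all [singletAmp] <;> simp_all [Fin.ext_iff]

lemma conj_sing_mul (v w : Fin (2*p) → Fin 2) :
    conj (sing p v) * sing p w
      = ∏ t : Fin p, conj (singletAmp (v (lo p t)) (v (hi p t))) *
          singletAmp (w (lo p t)) (w (hi p t)) := by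
  rw [sing, sing, map_prod, ← Finset.prod_mul_distrib]

lemma sing_orth (v w : Fin (2*p) → Fin 2) (t : Fin p)
    (h : (w (lo p t) ≠ v (lo p t) ∧ w (hi p t) = v (hi p t)) ∨
         (w (lo p t) = v (lo p t) ∧ w (hi p t) ≠ v (hi p t))) :
    conj (sing p v) * sing p w = 0 := by
  rw [conj_sing_mul]
  exact Finset.prod_eq_zero (Finset.mem_univ t) (singlet_flip_zero _ _ _ _ h)

lemma sum_sing_norm : ∑ v : Fin (2*p) → Fin 2, conj (sing p v) * sing p v = 1 := by
  calc ∑ v : Fin (2*p) → Fin 2, conj (sing p v) * sing p v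
      = ∑ v : Fin (2*p) → Fin 2, ∏ t : Fin p,
          conj (singletAmp (v (lo p t)) (v (hi p t))) * singletAmp (v (lo p t)) (v (hi p t)) := by
        exact Finset.sum_congr rfl fun v _ => conj_sing_mul v v
    _ = ∏ t : Fin p, ∑ z : Fin 2 × Fin 2, conj (singletAmp z.1 z.2) * singletAmp z.1 z.2 :=
        sing_pair_sum (fun _ x y => conj (singletAmp x y) * singletAmp x y)
    _ = 1 := by rw [Finset.prod_congr rfl fun t _ => pair_sum_norm, Finset.prod_const_one]

end S9

namespace S9
variable {p : ℕ}

lemma fne {N : ℕ} {a b : Fin N} (h : a.1 ≠ b.1) : a ≠ b := fun hc => h (congrArg Fin.val hc)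

lemma prod_local (t₀ : Fin p) (base : Fin p → ℂ) (e : ℂ) :
    (∏ t : Fin p, base t) * e = ∏ t : Fin p, (if t = t₀ then base t * e else base t) := by
  rw [← Finset.mul_prod_erase Finset.univ base (Finset.mem_univ t₀),
      ← Finset.mul_prod_erase Finset.univ _ (Finset.mem_univ t₀), if_pos rfl,
      Finset.prod_congr rfl (fun t ht => if_neg (Finset.ne_of_mem_erase ht))]
  ring

lemma sum_sing_local (t₀ : Fin p) (A : Fin 2 → Fin 2 → ℂ)
    (W : (Fin (2*p) → Fin 2) → ℂ)
    (hW : ∀ v, W v = ∏ t : Fin p, (if t = t₀ then A (v (lo p t)) (v (hi p t))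
        else conj (singletAmp (v (lo p t)) (v (hi p t))) * singletAmp (v (lo p t)) (v (hi p t))))
    (hA : ∑ z : Fin 2 × Fin 2, A z.1 z.2 = 0) :
    ∑ v : Fin (2*p) → Fin 2, W v = 0 := by
  rw [Finset.sum_congr rfl fun v _ => hW v,
    sing_pair_sum (fun t x y => if t = t₀ then A x y
      else conj (singletAmp x y) * singletAmp x y)]
  refine Finset.prod_eq_zero (Finset.mem_univ t₀) ?_
  simpa using hA

lemma sum_sing_z (q : Fin (2*p)) :
    ∑ v : Fin (2*p) → Fin 2, conj (sing p v) * zsgn (v q) * sing p v = 0 := by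
  by_cases hq : q.1 % 2 = 0
  · have hqlo : lo p (pt p q) = q := by apply Fin.ext; simp only [lo, pt]; omega
    refine sum_sing_local (pt p q)
      (fun x y => conj (singletAmp x y) * zsgn x * singletAmp x y) _ (fun v => ?_) ?_
    · rw [show conj (sing p v) * zsgn (v q) * sing p v
          = (conj (sing p v) * sing p v) * zsgn (v q) by ring,
        conj_sing_mul, prod_local (pt p q)]
      refine Finset.prod_congr rfl fun t _ => ?_
      by_cases ht : t = pt p q
      · rw [if_pos ht, if_pos ht, ht, hqlo]; ring
      · rw [if_neg ht, if_neg ht]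
    · exact pair_sum_z1
  · have hqhi : hi p (pt p q) = q := by apply Fin.ext; simp only [hi, pt]; omega
    refine sum_sing_local (pt p q)
      (fun x y => conj (singletAmp x y) * zsgn y * singletAmp x y) _ (fun v => ?_) ?_
    · rw [show conj (sing p v) * zsgn (v q) * sing p v
          = (conj (sing p v) * sing p v) * zsgn (v q) by ring,
        conj_sing_mul, prod_local (pt p q)]
      refine Finset.prod_congr rfl fun t _ => ?_
      by_cases ht : t = pt p q
      · rw [if_pos ht, if_pos ht, ht, hqhi]; ring
      · rw [if_neg ht, if_neg ht]
    · exact pair_sum_z2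

lemma sum_sing_xy (q q' : Fin (2*p)) (hne : q ≠ q') (hpt : pt p q = pt p q') :
    ∑ v : Fin (2*p) → Fin 2, conj (sing p v) * zsgn (v q') *
      sing p (Function.update (Function.update v q (v q).rev) q' (v q').rev) = 0 := by
  have hvne : q.1 ≠ q'.1 := fun h => hne (Fin.ext h)
  have hpt' : q.1 / 2 = q'.1 / 2 := congrArg Fin.val hpt
  set t₀ := pt p q with ht₀
  have hoff : ∀ (v : Fin (2*p) → Fin 2) (t : Fin p), t ≠ t₀ →
      (Function.update (Function.update v q (v q).rev) q' (v q').rev) (lo p t) = v (lo p t) ∧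
      (Function.update (Function.update v q (v q).rev) q' (v q').rev) (hi p t) = v (hi p t) := by
    intro v t ht
    have htv : t.1 ≠ q.1 / 2 := fun h => ht (Fin.ext h)
    constructor
    · rw [Function.update_of_ne (fne (by simp only [lo]; omega)),
        Function.update_of_ne (fne (by simp only [lo]; omega))]
    · rw [Function.update_of_ne (fne (by simp only [hi]; omega)),
        Function.update_of_ne (fne (by simp only [hi]; omega))]
  by_cases hq : q.1 % 2 = 0
  · have hqlo : lo p t₀ = q := by apply Fin.ext; simp only [lo, pt, ht₀]; omega
    have hqhi : hi p t₀ = q' := by apply Fin.ext; simp only [hi, pt, ht₀]; omega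
    refine sum_sing_local t₀
      (fun x y => conj (singletAmp x y) * zsgn y * singletAmp x.rev y.rev) _ (fun v => ?_) ?_
    · rw [show conj (sing p v) * zsgn (v q') *
            sing p (Function.update (Function.update v q (v q).rev) q' (v q').rev)
          = (conj (sing p v) *
             sing p (Function.update (Function.update v q (v q).rev) q' (v q').rev)) * zsgn (v q')
          by ring,
        conj_sing_mul, prod_local t₀]
      refine Finset.prod_congr rfl fun t _ => ?_
      by_cases ht : t = t₀
      · rw [if_pos ht, if_pos ht, ht, hqlo, hqhi]
        rw [Function.update_self, Function.update_of_ne hne, Function.update_self]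
        ring
      · rw [if_neg ht, if_neg ht, (hoff v t ht).1, (hoff v t ht).2]
    · exact pair_sum_xy1
  · have hqlo : lo p t₀ = q' := by apply Fin.ext; simp only [lo, pt, ht₀]; omega
    have hqhi : hi p t₀ = q := by apply Fin.ext; simp only [hi, pt, ht₀]; omega
    refine sum_sing_local t₀
      (fun x y => conj (singletAmp x y) * zsgn x * singletAmp x.rev y.rev) _ (fun v => ?_) ?_
    · rw [show conj (sing p v) * zsgn (v q') *
            sing p (Function.update (Function.update v q (v q).rev) q' (v q').rev)
          = (conj (sing p v) *
             sing p (Function.update (Function.update v q (v q).rev) q' (v q').rev)) * zsgn (v q')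
          by ring,
        conj_sing_mul, prod_local t₀]
      refine Finset.prod_congr rfl fun t _ => ?_
      by_cases ht : t = t₀
      · rw [if_pos ht, if_pos ht, ht, hqlo, hqhi]
        rw [Function.update_self, Function.update_of_ne hne, Function.update_self]
        ring
      · rw [if_neg ht, if_neg ht, (hoff v t ht).1, (hoff v t ht).2]
    · exact pair_sum_xy2

end S9


namespace S9


def wt {N : ℕ} (u : Fin N → Fin 2) : ℕ := (Finset.univ.filter fun i => u i = 1).card

def ckC (N k : ℕ) : ℂ := (((Real.sqrt (N.choose k) : ℝ) : ℂ))⁻¹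

def dick (N k : ℕ) (u : Fin N → Fin 2) : ℂ := if wt u = k then ckC N k else 0

lemma conj_ckC (N k : ℕ) : conj (ckC N k) = ckC N k := by
  rw [ckC, map_inv₀, Complex.conj_ofReal]

lemma conj_dick (N k : ℕ) (u : Fin N → Fin 2) : conj (dick N k u) = dick N k u := by
  rw [dick]; split
  · exact conj_ckC N k
  · exact map_zero _

lemma wt_sum {N : ℕ} (u : Fin N → Fin 2) :
    wt u = ∑ j : Fin N, (if u j = 1 then 1 else 0) := Finset.card_filter _ _

lemma wt_le {N : ℕ} (u : Fin N → Fin 2) : wt u ≤ N := by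
  rw [wt]
  calc (Finset.univ.filter fun i => u i = 1).card ≤ Finset.univ.card := Finset.card_filter_le _ _
    _ = N := by simp

lemma wt_update {N : ℕ} (u : Fin N → Fin 2) (i : Fin N) (a : Fin 2) :
    wt (Function.update u i a) + (if u i = 1 then 1 else 0)
      = wt u + (if a = 1 then 1 else 0) := by
  rw [wt_sum, wt_sum, ← Finset.add_sum_erase _ _ (Finset.mem_univ i),
    ← Finset.add_sum_erase _ (fun j => if u j = 1 then 1 else 0) (Finset.mem_univ i),
    Function.update_self,
    Finset.sum_congr rfl (fun j hj => by
      rw [Function.update_of_ne (Finset.ne_of_mem_erase hj)])]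
  ring

lemma wt_update0 {N : ℕ} (u : Fin N → Fin 2) (i : Fin N) (h : u i = 0) :
    wt (Function.update u i 1) = wt u + 1 := by
  have := wt_update u i 1
  rw [h, if_neg (by decide), if_pos rfl] at this
  omega

lemma wt_update1 {N : ℕ} (u : Fin N → Fin 2) (i : Fin N) (h : u i = 1) :
    wt (Function.update u i 0) + 1 = wt u := by
  have := wt_update u i 0
  rw [h, if_pos rfl, if_neg (by decide)] at this
  omega

lemma dick_flip (N l : ℕ) (u : Fin N → Fin 2) (i : Fin N) :
    dick N l (Function.update u i (u i).rev)
      = if u i = 0 then (if wt u + 1 = l then ckC N l else 0)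
        else (if wt u = l + 1 then ckC N l else 0) := by
  rcases (by decide : ∀ x : Fin 2, x = 0 ∨ x = 1) (u i) with h | h
  · rw [if_pos h, h, rev0, dick, wt_update0 u i h]
  · rw [if_neg (by rw [h]; decide), h, rev1, dick]
    have := wt_update1 u i h
    by_cases hc : wt u = l + 1
    · rw [if_pos (by omega), if_pos hc]
    · rw [if_neg (by omega), if_neg hc]

lemma sum_over_bits {N : ℕ} (u : Fin N → Fin 2) (h : Fin 2 → ℂ) :
    ∑ i : Fin N, h (u i) = ((N - wt u : ℕ) : ℂ) * h 0 + ((wt u : ℕ) : ℂ) * h 1 := by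
  rw [← Finset.sum_filter_add_sum_filter_not Finset.univ (fun i => u i = 1)]
  have h1 : ∀ i ∈ Finset.univ.filter fun i => u i = 1, h (u i) = h 1 := fun i hi => by
    rw [(Finset.mem_filter.mp hi).2]
  have h0 : ∀ i ∈ Finset.univ.filter fun i => ¬ u i = 1, h (u i) = h 0 := fun i hi => by
    rw [(by decide : ∀ x : Fin 2, x ≠ 1 → x = 0) (u i) (Finset.mem_filter.mp hi).2]
  rw [Finset.sum_congr rfl h1, Finset.sum_congr rfl h0, Finset.sum_const, Finset.sum_const]
  have hcard : (Finset.univ.filter fun i : Fin N => ¬ u i = 1).card = N - wt u := by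
    have := Finset.card_filter_add_card_filter_not
      (s := (Finset.univ : Finset (Fin N))) (p := fun i => u i = 1)
    have hN : (Finset.univ : Finset (Fin N)).card = N := by simp
    have hwt : (Finset.univ.filter fun i : Fin N => u i = 1).card = wt u := rfl
    omega
  rw [hcard]
  show (wt u) • h 1 + (N - wt u) • h 0 = _
  rw [nsmul_eq_mul, nsmul_eq_mul]
  ring

lemma sum_over_pairs {N : ℕ} (u : Fin N → Fin 2) (F : Fin 2 → Fin 2 → ℂ) :
    ∑ i : Fin N, ∑ j ∈ Finset.univ.erase i, F (u i) (u j)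
      = ((N - wt u : ℕ) : ℂ) * (((N - wt u : ℕ) : ℂ) * F 0 0 + ((wt u : ℕ) : ℂ) * F 0 1 - F 0 0)
      + ((wt u : ℕ) : ℂ) * (((N - wt u : ℕ) : ℂ) * F 1 0 + ((wt u : ℕ) : ℂ) * F 1 1 - F 1 1) := by
  have hin : ∀ i : Fin N, ∑ j ∈ Finset.univ.erase i, F (u i) (u j)
      = (∑ j : Fin N, F (u i) (u j)) - F (u i) (u i) :=
    fun i => Finset.sum_erase_eq_sub (Finset.mem_univ i)
  rw [Finset.sum_congr rfl fun i _ => hin i]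
  have hj : ∀ i : Fin N, (∑ j : Fin N, F (u i) (u j))
      = ((N - wt u : ℕ) : ℂ) * F (u i) 0 + ((wt u : ℕ) : ℂ) * F (u i) 1 :=
    fun i => sum_over_bits u (fun y => F (u i) y)
  rw [Finset.sum_congr rfl fun i _ => by rw [hj i]]
  rw [sum_over_bits u (fun x => ((N - wt u : ℕ) : ℂ) * F x 0 + ((wt u : ℕ) : ℂ) * F x 1 - F x x)]

lemma card_wt (N k : ℕ) :
    (Finset.univ.filter fun u : Fin N → Fin 2 => wt u = k).card = N.choose k := by
  have : ((Finset.univ : Finset (Fin N)).powersetCard k).card = N.choose k := by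
    rw [Finset.card_powersetCard]; simp
  rw [← this]
  refine Finset.card_bij (fun u _ => Finset.univ.filter fun i => u i = 1) ?_ ?_ ?_
  · intro u hu
    rw [Finset.mem_powersetCard]
    exact ⟨Finset.filter_subset _ _, (Finset.mem_filter.mp hu).2⟩
  · intro u hu u' hu' heq
    funext i
    have : (i ∈ Finset.univ.filter fun j => u j = 1) ↔ (i ∈ Finset.univ.filter fun j => u' j = 1) := by
      rw [heq]
    simp only [Finset.mem_filter, Finset.mem_univ, true_and] at this
    rcases (by decide : ∀ x : Fin 2, x = 0 ∨ x = 1) (u i) with h | h <;>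
      rcases (by decide : ∀ x : Fin 2, x = 0 ∨ x = 1) (u' i) with h' | h' <;>
      simp_all
  · intro b hb
    rw [Finset.mem_powersetCard] at hb
    refine ⟨fun i => if i ∈ b then 1 else 0, ?_, ?_⟩
    · rw [Finset.mem_filter]
      refine ⟨Finset.mem_univ _, ?_⟩
      rw [← hb.2, wt]
      congr 1
      ext i
      simp only [Finset.mem_filter, Finset.mem_univ, true_and]
      by_cases h : i ∈ b
      · simp [h]
      · simp [h]
    · ext i
      simp only [Finset.mem_filter, Finset.mem_univ, true_and]
      by_cases h : i ∈ b
      · simp [h]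
      · simp [h]

lemma sum_wt_const (N k : ℕ) (X : ℂ) :
    ∑ u : Fin N → Fin 2, (if wt u = k then X else 0) = (N.choose k : ℂ) * X := by
  rw [← Finset.sum_filter, Finset.sum_const, card_wt, nsmul_eq_mul]

lemma sqrt_ratio (N k : ℕ) (h : k + 1 ≤ N) :
    (N.choose k : ℝ) * ((N - k : ℕ) : ℝ) *
        ((Real.sqrt (N.choose k))⁻¹ * (Real.sqrt (N.choose (k+1)))⁻¹)
      = Real.sqrt (((N:ℝ) - k) * ((k:ℝ) + 1)) := by
  have hid : N.choose (k+1) * (k+1) = N.choose k * (N - k) := Nat.choose_succ_right_eq N k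
  have ha : 0 < N.choose k := Nat.choose_pos (by omega)
  have hb : 0 < N.choose (k+1) := Nat.choose_pos h
  have hNk : 0 < N - k := by omega
  have key : ((N.choose k : ℝ) * ((N - k : ℕ) : ℝ))
      = Real.sqrt ((N.choose k : ℝ) * ((N - k : ℕ) : ℝ)) *
        Real.sqrt ((N.choose (k+1) : ℝ) * ((k:ℝ) + 1)) := by
    have h1 : ((N.choose (k+1) : ℝ) * ((k:ℝ) + 1)) = ((N.choose k : ℝ) * ((N - k : ℕ) : ℝ)) := by
      exact_mod_cast congrArg (Nat.cast (R := ℝ)) hid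
    rw [h1, Real.mul_self_sqrt (by positivity)]
  rw [key, Real.sqrt_mul (by positivity), Real.sqrt_mul (by positivity)]
  have hsa : Real.sqrt (N.choose k) ≠ 0 := by positivity
  have hsb : Real.sqrt (N.choose (k+1)) ≠ 0 := by positivity
  have hcast : ((N - k : ℕ) : ℝ) = (N:ℝ) - k := by
    push_cast [Nat.cast_sub (by omega : k ≤ N)]
    ring
  rw [hcast, Real.sqrt_mul (by rw [← hcast]; positivity)]
  field_simp


end S9

namespace S9


lemma kdel_of_ne {a : ℤ} (h : ¬ a = 0) : kdel a = 0 := if_neg h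
lemma kdel_of_eq {a : ℤ} (h : a = 0) : kdel a = 1 := if_pos h


lemma zsgn0 : zsgn 0 = 1 := rfl
lemma zsgn1 : zsgn 1 = -1 := rfl
lemma sqrt_ratio2 (N k : ℕ) (h : k + 2 ≤ N) :
    (N.choose k : ℝ) * ((N - k : ℕ) : ℝ) * ((N - k - 1 : ℕ) : ℝ) *
      ((Real.sqrt (N.choose k))⁻¹ * (Real.sqrt (N.choose (k+2)))⁻¹)
      = Real.sqrt (((k:ℝ)+1) * ((k:ℝ)+2) * ((N:ℝ) - k) * ((N:ℝ) - k - 1)) := by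
  have hid1 : N.choose (k+1) * (k+1) = N.choose k * (N - k) := Nat.choose_succ_right_eq N k
  have hid2 : N.choose (k+2) * (k+2) = N.choose (k+1) * (N - (k+1)) := Nat.choose_succ_right_eq N (k+1)
  have hid : N.choose (k+2) * ((k+1) * (k+2)) = N.choose k * ((N - k) * (N - k - 1)) := by
    have h3 : N - (k+1) = N - k - 1 := by omega
    calc N.choose (k+2) * ((k+1) * (k+2)) = (N.choose (k+2) * (k+2)) * (k+1) := by ring
      _ = (N.choose (k+1) * (k+1)) * (N - k - 1) := by rw [hid2, h3]; ring
      _ = N.choose k * ((N - k) * (N - k - 1)) := by rw [hid1]; ring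
  have ha : 0 < N.choose k := Nat.choose_pos (by omega)
  have hb : 0 < N.choose (k+2) := Nat.choose_pos h
  have hc1 : ((N - k : ℕ) : ℝ) = (N:ℝ) - k := by
    push_cast [Nat.cast_sub (by omega : k ≤ N)]; ring
  have hc2 : ((N - k - 1 : ℕ) : ℝ) = (N:ℝ) - k - 1 := by
    rw [show N - k - 1 = N - (k+1) from by omega]
    push_cast [Nat.cast_sub (by omega : k + 1 ≤ N)]; ring
  have hcastid : (N.choose (k+2) : ℝ) * (((k:ℝ)+1) * ((k:ℝ)+2))
      = (N.choose k : ℝ) * (((N - k:ℕ):ℝ) * ((N - k - 1:ℕ):ℝ)) := by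
    exact_mod_cast congrArg (Nat.cast (R := ℝ)) hid
  symm
  rw [show ((k:ℝ)+1) * ((k:ℝ)+2) * ((N:ℝ) - k) * ((N:ℝ) - k - 1)
      = ((N.choose k : ℝ) * ((N - k : ℕ) : ℝ) * ((N - k - 1 : ℕ) : ℝ) *
        ((Real.sqrt (N.choose k))⁻¹ * (Real.sqrt (N.choose (k+2)))⁻¹))^2 from ?_,
    Real.sqrt_sq (by positivity)]
  rw [mul_pow, mul_pow, mul_pow, mul_pow]
  rw [show (Real.sqrt (N.choose k))⁻¹ ^ 2 = ((N.choose k : ℝ))⁻¹ from by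
      rw [← Real.sqrt_inv, Real.sq_sqrt (by positivity)],
    show (Real.sqrt (N.choose (k+2)))⁻¹ ^ 2 = ((N.choose (k+2) : ℝ))⁻¹ from by
      rw [← Real.sqrt_inv, Real.sq_sqrt (by positivity)]]
  rw [← hc2, ← hc1]
  have hane : (N.choose k : ℝ) ≠ 0 := by positivity
  have hbne : (N.choose (k+2) : ℝ) ≠ 0 := by positivity
  field_simp
  linear_combination ((N - k:ℕ):ℝ) * ((N - k - 1:ℕ):ℝ) * hcastid

def XZu (N k l : ℕ) (i j : Fin N) : ℂ :=
  ∑ u : Fin N → Fin 2,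
    dick N k u * zsgn (u j) * dick N l (Function.update u i (u i).rev)

lemma main_XZ (N k l : ℕ) (hk : k ≤ N) (hl : l ≤ N) :
    ∑ i : Fin N, ∑ j ∈ Finset.univ.erase i, XZu N k l i j
      = ((((N : ℝ) - 1 - 2 * (l : ℝ)) : ℝ) : ℂ) *
          (((Real.sqrt (((N : ℝ) - (l : ℝ)) * ((l : ℝ) + 1)) : ℝ) : ℂ)) * kdel ((k : ℤ) - (l : ℤ) - 1)
      + ((((N : ℝ) - 1 - 2 * (k : ℝ)) : ℝ) : ℂ) *
          (((Real.sqrt (((N : ℝ) - (k : ℝ)) * ((k : ℝ) + 1)) : ℝ) : ℂ)) * kdel ((l : ℤ) - (k : ℤ) - 1) := by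
  have swap : ∑ i : Fin N, ∑ j ∈ Finset.univ.erase i, XZu N k l i j
      = ∑ u : Fin N → Fin 2, ∑ i : Fin N, ∑ j ∈ Finset.univ.erase i,
          dick N k u * zsgn (u j) * dick N l (Function.update u i (u i).rev) := by
    unfold XZu
    trans ∑ i : Fin N, ∑ u : Fin N → Fin 2, ∑ j ∈ Finset.univ.erase i,
        dick N k u * zsgn (u j) * dick N l (Function.update u i (u i).rev)
    · exact Finset.sum_congr rfl fun i _ => Finset.sum_comm
    · exact Finset.sum_comm
  rw [swap]
  have inner : ∀ u : Fin N → Fin 2,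
      (∑ i : Fin N, ∑ j ∈ Finset.univ.erase i,
          dick N k u * zsgn (u j) * dick N l (Function.update u i (u i).rev))
      = if wt u = k then
          (((N - k : ℕ) : ℂ) * ((ckC N k * (if k + 1 = l then ckC N l else 0)) *
              ((((N - k : ℕ) : ℂ) - (k:ℂ)) - 1))
           + (k : ℂ) * ((ckC N k * (if k = l + 1 then ckC N l else 0)) *
              ((((N - k : ℕ) : ℂ) - (k:ℂ)) + 1)))
        else 0 := by
    intro u
    have hstep1 : ∀ i : Fin N,
        (∑ j ∈ Finset.univ.erase i, dick N k u * zsgn (u j) * dick N l (Function.update u i (u i).rev))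
        = (dick N k u * (if u i = 0 then (if wt u + 1 = l then ckC N l else 0)
            else (if wt u = l + 1 then ckC N l else 0))) *
          (((((N - wt u : ℕ) : ℂ) - (wt u : ℂ))) - zsgn (u i)) := by
      intro i
      have : (∑ j ∈ Finset.univ.erase i, dick N k u * zsgn (u j) * dick N l (Function.update u i (u i).rev))
          = (dick N k u * dick N l (Function.update u i (u i).rev)) *
            (∑ j ∈ Finset.univ.erase i, zsgn (u j)) := by
        rw [Finset.mul_sum]
        exact Finset.sum_congr rfl fun j _ => by ring
      rw [this, Finset.sum_erase_eq_sub (Finset.mem_univ i), sum_over_bits u zsgn,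
        zsgn0, zsgn1, dick_flip]
      ring
    rw [Finset.sum_congr rfl fun i _ => hstep1 i]
    rw [show (∑ i : Fin N, (dick N k u * (if u i = 0 then (if wt u + 1 = l then ckC N l else 0)
            else (if wt u = l + 1 then ckC N l else 0))) *
          (((((N - wt u : ℕ) : ℂ) - (wt u : ℂ))) - zsgn (u i)))
        = ((N - wt u : ℕ) : ℂ) *
            ((dick N k u * (if (0:Fin 2) = 0 then (if wt u + 1 = l then ckC N l else 0)
              else (if wt u = l + 1 then ckC N l else 0))) *
            (((((N - wt u : ℕ) : ℂ) - (wt u : ℂ))) - zsgn 0))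
          + ((wt u : ℕ) : ℂ) *
            ((dick N k u * (if (1:Fin 2) = 0 then (if wt u + 1 = l then ckC N l else 0)
              else (if wt u = l + 1 then ckC N l else 0))) *
            (((((N - wt u : ℕ) : ℂ) - (wt u : ℂ))) - zsgn 1))
      from sum_over_bits u (fun x => (dick N k u * (if x = 0 then (if wt u + 1 = l then ckC N l else 0)
            else (if wt u = l + 1 then ckC N l else 0))) *
          (((((N - wt u : ℕ) : ℂ) - (wt u : ℂ))) - zsgn x))]
    by_cases hw : wt u = k
    · rw [if_pos hw,
        show dick N k u = ckC N k from by
          rw [show dick N k u = if wt u = k then ckC N k else 0 from rfl, if_pos hw],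
        hw,
        show (if (0:Fin 2) = 0 then (if k + 1 = l then ckC N l else 0)
          else (if k = l + 1 then ckC N l else 0)) = (if k + 1 = l then ckC N l else 0) from rfl,
        show (if (1:Fin 2) = 0 then (if k + 1 = l then ckC N l else 0)
          else (if k = l + 1 then ckC N l else 0)) = (if k = l + 1 then ckC N l else 0) from by
          rw [if_neg (show ¬(1:Fin 2) = 0 by decide)],
        zsgn0, zsgn1]
      ring
    · rw [if_neg hw,
        show dick N k u = (0:ℂ) from by
          rw [show dick N k u = if wt u = k then ckC N k else 0 from rfl, if_neg hw]]
      ring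
  rw [Finset.sum_congr rfl fun u _ => inner u, sum_wt_const]
  by_cases h1 : l = k + 1
  · subst h1
    rw [show ((k:ℤ) - ((k+1:ℕ):ℤ) - 1) = -2 from by push_cast; ring,
      show (((k+1:ℕ):ℤ) - (k:ℤ) - 1) = 0 from by push_cast; ring,
      show kdel (-2) = 0 from rfl, show kdel 0 = 1 from rfl]
    rw [if_pos rfl, if_neg (show ¬ k = (k+1) + 1 by omega)]
    have hk1 : k + 1 ≤ N := hl
    have hR := sqrt_ratio N k hk1
    have hc1 : ((N - k : ℕ) : ℝ) = (N:ℝ) - k := by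
      push_cast [Nat.cast_sub (by omega : k ≤ N)]; ring
    rw [ckC, ckC]
    have hc1C : ((N - k : ℕ) : ℂ) = (N:ℂ) - (k:ℂ) := by rw [Nat.cast_sub hk]
    have hRC := congrArg (Complex.ofReal) hR
    push_cast [hc1] at hRC
    push_cast [hc1C]
    linear_combination ((N:ℂ) - 1 - 2*(k:ℂ)) * hRC
  · by_cases h2 : k = l + 1
    · subst h2
      rw [kdel_of_eq (show (((l+1:ℕ):ℤ) - (l:ℤ) - 1) = 0 from by push_cast; ring),
        kdel_of_ne (show ¬ ((l:ℤ) - ((l+1:ℕ):ℤ) - 1) = 0 from by push_cast; omega)]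
      rw [if_neg (show ¬ (l+1) + 1 = l by omega), if_pos rfl]
      have hl1 : l + 1 ≤ N := hk
      have hR := sqrt_ratio N l hl1
      have hc1 : ((N - l : ℕ) : ℝ) = (N:ℝ) - l := by
        push_cast [Nat.cast_sub (by omega : l ≤ N)]; ring
      have hc1C : ((N - l : ℕ) : ℂ) = (N:ℂ) - (l:ℂ) := by rw [Nat.cast_sub (by omega : l ≤ N)]
      have hc2C : ((N - (l+1) : ℕ) : ℂ) = (N:ℂ) - (l:ℂ) - 1 := by
        rw [Nat.cast_sub (by omega : l + 1 ≤ N)]; push_cast; ring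
      have hidn : N.choose (l+1) * (l+1) = N.choose l * (N - l) := Nat.choose_succ_right_eq N l
      have hidC : ((N.choose (l+1) : ℂ)) * ((l:ℂ)+1) = ((N.choose l : ℂ)) * (((N - l:ℕ)):ℂ) := by
        exact_mod_cast congrArg (Nat.cast (R := ℂ)) hidn
      rw [ckC, ckC]
      have hRC := congrArg (Complex.ofReal) hR
      push_cast [hc1] at hRC
      push_cast [hc1C] at hidC
      push_cast [hc2C]
      linear_combination ((N:ℂ) - 1 - 2*(l:ℂ)) * hRC
        + ((N:ℂ) - 1 - 2*(l:ℂ)) * (((Real.sqrt (N.choose (l+1)) : ℝ):ℂ))⁻¹ *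
          (((Real.sqrt (N.choose l) : ℝ):ℂ))⁻¹ * hidC
    · rw [kdel_of_ne (show ¬ ((k:ℤ) - (l:ℤ) - 1) = 0 from by omega),
        kdel_of_ne (show ¬ ((l:ℤ) - (k:ℤ) - 1) = 0 from by omega),
        if_neg (show ¬ k + 1 = l by omega), if_neg h2]
      ring


def YZu (N k l : ℕ) (i j : Fin N) : ℂ :=
  ∑ u : Fin N → Fin 2,
    dick N k u * (-Complex.I * zsgn (u i) * zsgn (u j)) * dick N l (Function.update u i (u i).rev)

lemma main_YZ (N k l : ℕ) (hk : k ≤ N) (hl : l ≤ N) :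
    ∑ i : Fin N, ∑ j ∈ Finset.univ.erase i, YZu N k l i j
      = Complex.I * ((((k : ℤ) - (l : ℤ)).sign : ℤ) : ℂ) *
        (((((N : ℝ) - 1 - 2 * (l : ℝ)) : ℝ) : ℂ) *
          (((Real.sqrt (((N : ℝ) - (l : ℝ)) * ((l : ℝ) + 1)) : ℝ) : ℂ)) * kdel ((k : ℤ) - (l : ℤ) - 1)
        + ((((N : ℝ) - 1 - 2 * (k : ℝ)) : ℝ) : ℂ) *
          (((Real.sqrt (((N : ℝ) - (k : ℝ)) * ((k : ℝ) + 1)) : ℝ) : ℂ)) * kdel ((l : ℤ) - (k : ℤ) - 1)) := by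
  have swap : ∑ i : Fin N, ∑ j ∈ Finset.univ.erase i, YZu N k l i j
      = ∑ u : Fin N → Fin 2, ∑ i : Fin N, ∑ j ∈ Finset.univ.erase i,
          dick N k u * (-Complex.I * zsgn (u i) * zsgn (u j)) *
            dick N l (Function.update u i (u i).rev) := by
    unfold YZu
    trans ∑ i : Fin N, ∑ u : Fin N → Fin 2, ∑ j ∈ Finset.univ.erase i,
        dick N k u * (-Complex.I * zsgn (u i) * zsgn (u j)) *
          dick N l (Function.update u i (u i).rev)
    · exact Finset.sum_congr rfl fun i _ => Finset.sum_comm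
    · exact Finset.sum_comm
  rw [swap]
  have inner : ∀ u : Fin N → Fin 2,
      (∑ i : Fin N, ∑ j ∈ Finset.univ.erase i,
          dick N k u * (-Complex.I * zsgn (u i) * zsgn (u j)) *
            dick N l (Function.update u i (u i).rev))
      = if wt u = k then
          (((N - k : ℕ) : ℂ) * ((ckC N k * (-Complex.I) * (if k + 1 = l then ckC N l else 0)) *
              ((((N - k : ℕ) : ℂ) - (k:ℂ)) - 1))
           + (k : ℂ) * ((ckC N k * Complex.I * (if k = l + 1 then ckC N l else 0)) *
              ((((N - k : ℕ) : ℂ) - (k:ℂ)) + 1)))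
        else 0 := by
    intro u
    have hstep1 : ∀ i : Fin N,
        (∑ j ∈ Finset.univ.erase i, dick N k u * (-Complex.I * zsgn (u i) * zsgn (u j)) *
            dick N l (Function.update u i (u i).rev))
        = (dick N k u * (-Complex.I * zsgn (u i)) *
            (if u i = 0 then (if wt u + 1 = l then ckC N l else 0)
            else (if wt u = l + 1 then ckC N l else 0))) *
          (((((N - wt u : ℕ) : ℂ) - (wt u : ℂ))) - zsgn (u i)) := by
      intro i
      have : (∑ j ∈ Finset.univ.erase i, dick N k u * (-Complex.I * zsgn (u i) * zsgn (u j)) *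
            dick N l (Function.update u i (u i).rev))
          = (dick N k u * (-Complex.I * zsgn (u i)) * dick N l (Function.update u i (u i).rev)) *
            (∑ j ∈ Finset.univ.erase i, zsgn (u j)) := by
        rw [Finset.mul_sum]
        exact Finset.sum_congr rfl fun j _ => by ring
      rw [this, Finset.sum_erase_eq_sub (Finset.mem_univ i), sum_over_bits u zsgn,
        zsgn0, zsgn1, dick_flip]
      ring
    rw [Finset.sum_congr rfl fun i _ => hstep1 i]
    rw [show (∑ i : Fin N, (dick N k u * (-Complex.I * zsgn (u i)) *
            (if u i = 0 then (if wt u + 1 = l then ckC N l else 0)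
            else (if wt u = l + 1 then ckC N l else 0))) *
          (((((N - wt u : ℕ) : ℂ) - (wt u : ℂ))) - zsgn (u i)))
        = ((N - wt u : ℕ) : ℂ) *
            ((dick N k u * (-Complex.I * zsgn 0) *
              (if (0:Fin 2) = 0 then (if wt u + 1 = l then ckC N l else 0)
              else (if wt u = l + 1 then ckC N l else 0))) *
            (((((N - wt u : ℕ) : ℂ) - (wt u : ℂ))) - zsgn 0))
          + ((wt u : ℕ) : ℂ) *
            ((dick N k u * (-Complex.I * zsgn 1) *
              (if (1:Fin 2) = 0 then (if wt u + 1 = l then ckC N l else 0)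
              else (if wt u = l + 1 then ckC N l else 0))) *
            (((((N - wt u : ℕ) : ℂ) - (wt u : ℂ))) - zsgn 1))
      from sum_over_bits u (fun x => (dick N k u * (-Complex.I * zsgn x) *
            (if x = 0 then (if wt u + 1 = l then ckC N l else 0)
            else (if wt u = l + 1 then ckC N l else 0))) *
          (((((N - wt u : ℕ) : ℂ) - (wt u : ℂ))) - zsgn x))]
    by_cases hw : wt u = k
    · rw [if_pos hw,
        show dick N k u = ckC N k from by
          rw [show dick N k u = if wt u = k then ckC N k else 0 from rfl, if_pos hw],
        hw,
        show (if (0:Fin 2) = 0 then (if k + 1 = l then ckC N l else 0)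
          else (if k = l + 1 then ckC N l else 0)) = (if k + 1 = l then ckC N l else 0) from rfl,
        show (if (1:Fin 2) = 0 then (if k + 1 = l then ckC N l else 0)
          else (if k = l + 1 then ckC N l else 0)) = (if k = l + 1 then ckC N l else 0) from by
          rw [if_neg (show ¬(1:Fin 2) = 0 by decide)],
        zsgn0, zsgn1]
      ring
    · rw [if_neg hw,
        show dick N k u = (0:ℂ) from by
          rw [show dick N k u = if wt u = k then ckC N k else 0 from rfl, if_neg hw]]
      ring
  rw [Finset.sum_congr rfl fun u _ => inner u, sum_wt_const]
  by_cases h1 : l = k + 1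
  · subst h1
    rw [kdel_of_ne (show ¬ ((k:ℤ) - ((k+1:ℕ):ℤ) - 1) = 0 from by push_cast; omega),
      kdel_of_eq (show (((k+1:ℕ):ℤ) - (k:ℤ) - 1) = 0 from by push_cast; ring)]
    rw [if_pos rfl, if_neg (show ¬ k = (k+1) + 1 by omega)]
    rw [show ((k:ℤ) - ((k+1:ℕ):ℤ)) = -1 from by push_cast; ring,
      show (((-1:ℤ).sign : ℤ) : ℂ) = -1 from by norm_num]
    have hk1 : k + 1 ≤ N := hl
    have hR := sqrt_ratio N k hk1
    have hc1 : ((N - k : ℕ) : ℝ) = (N:ℝ) - k := by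
      push_cast [Nat.cast_sub (by omega : k ≤ N)]; ring
    rw [ckC, ckC]
    have hc1C : ((N - k : ℕ) : ℂ) = (N:ℂ) - (k:ℂ) := by rw [Nat.cast_sub hk]
    have hRC := congrArg (Complex.ofReal) hR
    push_cast [hc1] at hRC
    push_cast [hc1C]
    linear_combination (-Complex.I) * ((N:ℂ) - 1 - 2*(k:ℂ)) * hRC
  · by_cases h2 : k = l + 1
    · subst h2
      rw [kdel_of_eq (show (((l+1:ℕ):ℤ) - (l:ℤ) - 1) = 0 from by push_cast; ring),
        kdel_of_ne (show ¬ ((l:ℤ) - ((l+1:ℕ):ℤ) - 1) = 0 from by push_cast; omega)]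
      rw [if_neg (show ¬ (l+1) + 1 = l by omega), if_pos rfl]
      rw [show (((l+1:ℕ):ℤ) - (l:ℤ)) = 1 from by push_cast; ring,
        show (((1:ℤ).sign : ℤ) : ℂ) = 1 from by norm_num]
      have hl1 : l + 1 ≤ N := hk
      have hR := sqrt_ratio N l hl1
      have hc1 : ((N - l : ℕ) : ℝ) = (N:ℝ) - l := by
        push_cast [Nat.cast_sub (by omega : l ≤ N)]; ring
      have hc1C : ((N - l : ℕ) : ℂ) = (N:ℂ) - (l:ℂ) := by rw [Nat.cast_sub (by omega : l ≤ N)]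
      have hc2C : ((N - (l+1) : ℕ) : ℂ) = (N:ℂ) - (l:ℂ) - 1 := by
        rw [Nat.cast_sub (by omega : l + 1 ≤ N)]; push_cast; ring
      have hidn : N.choose (l+1) * (l+1) = N.choose l * (N - l) := Nat.choose_succ_right_eq N l
      have hidC : ((N.choose (l+1) : ℂ)) * ((l:ℂ)+1) = ((N.choose l : ℂ)) * (((N - l:ℕ)):ℂ) := by
        exact_mod_cast congrArg (Nat.cast (R := ℂ)) hidn
      rw [ckC, ckC]
      have hRC := congrArg (Complex.ofReal) hR
      push_cast [hc1] at hRC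
      push_cast [hc1C] at hidC
      push_cast [hc2C]
      linear_combination Complex.I * ((N:ℂ) - 1 - 2*(l:ℂ)) * hRC
        + Complex.I * ((N:ℂ) - 1 - 2*(l:ℂ)) * (((Real.sqrt (N.choose (l+1)) : ℝ):ℂ))⁻¹ *
          (((Real.sqrt (N.choose l) : ℝ):ℂ))⁻¹ * hidC
    · rw [kdel_of_ne (show ¬ ((k:ℤ) - (l:ℤ) - 1) = 0 from by omega),
        kdel_of_ne (show ¬ ((l:ℤ) - (k:ℤ) - 1) = 0 from by omega),
        if_neg (show ¬ k + 1 = l by omega), if_neg h2]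
      ring


lemma dick_flip2 (N l : ℕ) (u : Fin N → Fin 2) (i j : Fin N) (hij : i ≠ j) :
    dick N l (Function.update (Function.update u i (u i).rev) j (u j).rev)
      = if u i = 0 then (if u j = 0 then (if wt u + 2 = l then ckC N l else 0)
                          else (if wt u = l then ckC N l else 0))
        else (if u j = 0 then (if wt u = l then ckC N l else 0)
              else (if wt u = l + 2 then ckC N l else 0)) := by
  have huj : (Function.update u i (u i).rev) j = u j := Function.update_of_ne (Ne.symm hij) _ _
  have hd : ∀ w : Fin N → Fin 2, dick N l w = if wt w = l then ckC N l else 0 := fun w => rfl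
  rcases (by decide : ∀ x : Fin 2, x = 0 ∨ x = 1) (u i) with hi | hi <;>
    rcases (by decide : ∀ x : Fin 2, x = 0 ∨ x = 1) (u j) with hj | hj
  · have h1 : wt (Function.update u i (u i).rev) = wt u + 1 := by
      rw [hi, rev0]; exact wt_update0 u i hi
    have h2 : wt (Function.update (Function.update u i (u i).rev) j (u j).rev)
        = wt u + 2 := by
      rw [hj, rev0, wt_update0 _ j (by rw [huj, hj]), h1]
    rw [hd, h2, if_pos hi, if_pos hj]
  · have h1 : wt (Function.update u i (u i).rev) = wt u + 1 := by
      rw [hi, rev0]; exact wt_update0 u i hi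
    have h2 : wt (Function.update (Function.update u i (u i).rev) j (u j).rev) = wt u := by
      have := wt_update1 _ j (show (Function.update u i (u i).rev) j = 1 from by rw [huj, hj])
      rw [h1] at this
      rw [hj, rev1]
      omega
    rw [hd, h2, if_pos hi, if_neg (show ¬ u j = 0 from by rw [hj]; decide)]
  · have h1 : wt (Function.update u i (u i).rev) + 1 = wt u := by
      rw [hi, rev1]; exact wt_update1 u i hi
    have h2 : wt (Function.update (Function.update u i (u i).rev) j (u j).rev) = wt u := by
      have := wt_update0 _ j (show (Function.update u i (u i).rev) j = 0 from by rw [huj, hj])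
      rw [hj, rev0]
      omega
    rw [hd, h2, if_neg (show ¬ u i = 0 from by rw [hi]; decide), if_pos hj]
  · have h1 : wt (Function.update u i (u i).rev) + 1 = wt u := by
      rw [hi, rev1]; exact wt_update1 u i hi
    have h2 : wt (Function.update (Function.update u i (u i).rev) j (u j).rev) + 2 = wt u := by
      have := wt_update1 _ j (show (Function.update u i (u i).rev) j = 1 from by rw [huj, hj])
      rw [hj, rev1]
      omega
    rw [hd, if_neg (show ¬ u i = 0 from by rw [hi]; decide), if_neg (show ¬ u j = 0 from by rw [hj]; decide)]
    by_cases hc : wt u = l + 2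
    · rw [if_pos (by omega), if_pos hc]
    · rw [if_neg (by omega), if_neg hc]

def XYu (N k l : ℕ) (i j : Fin N) : ℂ :=
  ∑ u : Fin N → Fin 2,
    dick N k u * (-Complex.I * zsgn (u j)) *
      dick N l (Function.update (Function.update u i (u i).rev) j (u j).rev)

lemma main_XY (N k l : ℕ) (hk : k ≤ N) (hl : l ≤ N) :
    ∑ i : Fin N, ∑ j ∈ Finset.univ.erase i, XYu N k l i j
      = Complex.I * ((((k : ℤ) - (l : ℤ)).sign : ℤ) : ℂ) *
        ((((Real.sqrt (((l:ℝ)+1) * ((l:ℝ)+2) * ((N:ℝ) - l) * ((N:ℝ) - l - 1)) : ℝ) : ℂ)) *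
            kdel ((k : ℤ) - (l : ℤ) - 2)
          + (((Real.sqrt (((k:ℝ)+1) * ((k:ℝ)+2) * ((N:ℝ) - k) * ((N:ℝ) - k - 1)) : ℝ) : ℂ)) *
            kdel ((l : ℤ) - (k : ℤ) - 2)) := by
  have swap : ∑ i : Fin N, ∑ j ∈ Finset.univ.erase i, XYu N k l i j
      = ∑ u : Fin N → Fin 2, ∑ i : Fin N, ∑ j ∈ Finset.univ.erase i,
          dick N k u * (-Complex.I * zsgn (u j)) *
            dick N l (Function.update (Function.update u i (u i).rev) j (u j).rev) := by
    unfold XYu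
    trans ∑ i : Fin N, ∑ u : Fin N → Fin 2, ∑ j ∈ Finset.univ.erase i,
        dick N k u * (-Complex.I * zsgn (u j)) *
          dick N l (Function.update (Function.update u i (u i).rev) j (u j).rev)
    · exact Finset.sum_congr rfl fun i _ => Finset.sum_comm
    · exact Finset.sum_comm
  rw [swap]
  have inner : ∀ u : Fin N → Fin 2,
      (∑ i : Fin N, ∑ j ∈ Finset.univ.erase i,
          dick N k u * (-Complex.I * zsgn (u j)) *
            dick N l (Function.update (Function.update u i (u i).rev) j (u j).rev))
      = if wt u = k then
          (((N - k : ℕ) : ℂ) * (((N - k : ℕ) : ℂ) *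
              (ckC N k * (-Complex.I) * (if k + 2 = l then ckC N l else 0))
            + (k : ℂ) * (ckC N k * Complex.I * (if k = l then ckC N l else 0))
            - (ckC N k * (-Complex.I) * (if k + 2 = l then ckC N l else 0)))
          + (k : ℂ) * (((N - k : ℕ) : ℂ) *
              (ckC N k * (-Complex.I) * (if k = l then ckC N l else 0))
            + (k : ℂ) * (ckC N k * Complex.I * (if k = l + 2 then ckC N l else 0))
            - (ckC N k * Complex.I * (if k = l + 2 then ckC N l else 0))))
        else 0 := by
    intro u
    have hre : ∀ i : Fin N, ∀ j ∈ Finset.univ.erase i,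
        dick N k u * (-Complex.I * zsgn (u j)) *
          dick N l (Function.update (Function.update u i (u i).rev) j (u j).rev)
        = (fun x y : Fin 2 => dick N k u * (-Complex.I * zsgn y) *
            (if x = 0 then (if y = 0 then (if wt u + 2 = l then ckC N l else 0)
                          else (if wt u = l then ckC N l else 0))
            else (if y = 0 then (if wt u = l then ckC N l else 0)
              else (if wt u = l + 2 then ckC N l else 0)))) (u i) (u j) := by
      intro i j hj
      rw [dick_flip2 N l u i j (Ne.symm (Finset.mem_erase.mp hj).1)]
    rw [Finset.sum_congr rfl fun i _ => Finset.sum_congr rfl (hre i)]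
    rw [sum_over_pairs u (fun x y : Fin 2 => dick N k u * (-Complex.I * zsgn y) *
            (if x = 0 then (if y = 0 then (if wt u + 2 = l then ckC N l else 0)
                          else (if wt u = l then ckC N l else 0))
            else (if y = 0 then (if wt u = l then ckC N l else 0)
              else (if wt u = l + 2 then ckC N l else 0))))]
    have e00 : (if (0:Fin 2) = 0 then (if (0:Fin 2) = 0 then (if wt u + 2 = l then ckC N l else 0)
            else (if wt u = l then ckC N l else 0))
          else (if (0:Fin 2) = 0 then (if wt u = l then ckC N l else 0)
            else (if wt u = l + 2 then ckC N l else 0))) = (if wt u + 2 = l then ckC N l else 0) := rfl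
    have e01 : (if (0:Fin 2) = 0 then (if (1:Fin 2) = 0 then (if wt u + 2 = l then ckC N l else 0)
            else (if wt u = l then ckC N l else 0))
          else (if (1:Fin 2) = 0 then (if wt u = l then ckC N l else 0)
            else (if wt u = l + 2 then ckC N l else 0))) = (if wt u = l then ckC N l else 0) := by
      rw [if_pos rfl, if_neg (show ¬(1:Fin 2) = 0 by decide)]
    have e10 : (if (1:Fin 2) = 0 then (if (0:Fin 2) = 0 then (if wt u + 2 = l then ckC N l else 0)
            else (if wt u = l then ckC N l else 0))
          else (if (0:Fin 2) = 0 then (if wt u = l then ckC N l else 0)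
            else (if wt u = l + 2 then ckC N l else 0))) = (if wt u = l then ckC N l else 0) := by
      rw [if_neg (show ¬(1:Fin 2) = 0 by decide), if_pos rfl]
    have e11 : (if (1:Fin 2) = 0 then (if (1:Fin 2) = 0 then (if wt u + 2 = l then ckC N l else 0)
            else (if wt u = l then ckC N l else 0))
          else (if (1:Fin 2) = 0 then (if wt u = l then ckC N l else 0)
            else (if wt u = l + 2 then ckC N l else 0))) = (if wt u = l + 2 then ckC N l else 0) := by
      rw [if_neg (show ¬(1:Fin 2) = 0 by decide), if_neg (show ¬(1:Fin 2) = 0 by decide)]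
    rw [e00, e01, e10, e11, zsgn0, zsgn1]
    by_cases hw : wt u = k
    · rw [if_pos hw,
        show dick N k u = ckC N k from by
          rw [show dick N k u = if wt u = k then ckC N k else 0 from rfl, if_pos hw],
        hw]
      ring
    · rw [if_neg hw,
        show dick N k u = (0:ℂ) from by
          rw [show dick N k u = if wt u = k then ckC N k else 0 from rfl, if_neg hw]]
      ring
  rw [Finset.sum_congr rfl fun u _ => inner u, sum_wt_const]
  by_cases h1 : l = k + 2
  · subst h1
    rw [kdel_of_ne (show ¬ ((k:ℤ) - ((k+2:ℕ):ℤ) - 2) = 0 from by push_cast; omega),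
      kdel_of_eq (show (((k+2:ℕ):ℤ) - (k:ℤ) - 2) = 0 from by push_cast; ring)]
    rw [if_pos rfl, if_neg (show ¬ k = k + 2 by omega), if_neg (show ¬ k = (k+2) + 2 by omega)]
    rw [show ((k:ℤ) - ((k+2:ℕ):ℤ)) = -2 from by push_cast; ring,
      show (((-2:ℤ).sign : ℤ) : ℂ) = -1 from by rw [show ((-2:ℤ).sign) = -1 from rfl]; norm_num]
    have hk2 : k + 2 ≤ N := hl
    have hR := sqrt_ratio2 N k hk2
    have hc1 : ((N - k : ℕ) : ℝ) = (N:ℝ) - k := by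
      push_cast [Nat.cast_sub (by omega : k ≤ N)]; ring
    have hc2 : ((N - k - 1 : ℕ) : ℝ) = (N:ℝ) - k - 1 := by
      rw [show N - k - 1 = N - (k+1) from by omega]
      push_cast [Nat.cast_sub (by omega : k + 1 ≤ N)]; ring
    rw [ckC, ckC]
    have hc1C : ((N - k : ℕ) : ℂ) = (N:ℂ) - (k:ℂ) := by rw [Nat.cast_sub hk]
    have hRC := congrArg (Complex.ofReal) hR
    push_cast [hc1, hc2] at hRC
    push_cast [hc1C]
    linear_combination (-Complex.I) * hRC
  · by_cases h2 : k = l + 2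
    · subst h2
      rw [kdel_of_eq (show (((l+2:ℕ):ℤ) - (l:ℤ) - 2) = 0 from by push_cast; ring),
        kdel_of_ne (show ¬ ((l:ℤ) - ((l+2:ℕ):ℤ) - 2) = 0 from by push_cast; omega)]
      rw [if_neg (show ¬ (l+2) + 2 = l by omega), if_neg (show ¬ l + 2 = l by omega), if_pos rfl]
      rw [show (((l+2:ℕ):ℤ) - (l:ℤ)) = 2 from by push_cast; ring,
        show (((2:ℤ).sign : ℤ) : ℂ) = 1 from by rw [show ((2:ℤ).sign) = 1 from rfl]; norm_num]
      have hl2 : l + 2 ≤ N := hk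
      have hR := sqrt_ratio2 N l hl2
      have hc1 : ((N - l : ℕ) : ℝ) = (N:ℝ) - l := by
        push_cast [Nat.cast_sub (by omega : l ≤ N)]; ring
      have hc2 : ((N - l - 1 : ℕ) : ℝ) = (N:ℝ) - l - 1 := by
        rw [show N - l - 1 = N - (l+1) from by omega]
        push_cast [Nat.cast_sub (by omega : l + 1 ≤ N)]; ring
      have hc1C : ((N - (l+2) : ℕ) : ℂ) = (N:ℂ) - (l:ℂ) - 2 := by
        rw [Nat.cast_sub (by omega : l + 2 ≤ N)]; push_cast; ring
      have hidn : N.choose (l+2) * ((l+1) * (l+2)) = N.choose l * ((N - l) * (N - l - 1)) := by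
        have hid1 : N.choose (l+1) * (l+1) = N.choose l * (N - l) := Nat.choose_succ_right_eq N l
        have hid2 : N.choose (l+2) * (l+2) = N.choose (l+1) * (N - (l+1)) :=
          Nat.choose_succ_right_eq N (l+1)
        have h3 : N - (l+1) = N - l - 1 := by omega
        calc N.choose (l+2) * ((l+1) * (l+2)) = (N.choose (l+2) * (l+2)) * (l+1) := by ring
          _ = (N.choose (l+1) * (l+1)) * (N - l - 1) := by rw [hid2, h3]; ring
          _ = N.choose l * ((N - l) * (N - l - 1)) := by rw [hid1]; ring
      have hidC : ((N.choose (l+2) : ℂ)) * (((l:ℂ)+1) * ((l:ℂ)+2))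
          = ((N.choose l : ℂ)) * ((((N - l:ℕ)):ℂ) * (((N - l - 1:ℕ)):ℂ)) := by
        exact_mod_cast congrArg (Nat.cast (R := ℂ)) hidn
      rw [ckC, ckC]
      have hRC := congrArg (Complex.ofReal) hR
      push_cast [hc1, hc2] at hRC
      have hc1C' : ((N - l : ℕ) : ℂ) = (N:ℂ) - (l:ℂ) := by rw [Nat.cast_sub (by omega : l ≤ N)]
      have hc2C' : ((N - l - 1 : ℕ) : ℂ) = (N:ℂ) - (l:ℂ) - 1 := by
        rw [show N - l - 1 = N - (l+1) from by omega, Nat.cast_sub (by omega : l + 1 ≤ N)]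
        push_cast; ring
      push_cast [hc1C', hc2C'] at hidC
      push_cast [hc1C]
      linear_combination Complex.I * hRC
        + Complex.I * (((Real.sqrt (N.choose (l+2)) : ℝ):ℂ))⁻¹ *
          (((Real.sqrt (N.choose l) : ℝ):ℂ))⁻¹ * hidC
    · rw [kdel_of_ne (show ¬ ((k:ℤ) - (l:ℤ) - 2) = 0 from by omega),
        kdel_of_ne (show ¬ ((l:ℤ) - (k:ℤ) - 2) = 0 from by omega),
        if_neg (show ¬ k + 2 = l by omega), if_neg (show ¬ k = l + 2 from h2)]
      ring


end S9

namespace S9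

lemma rev_ne (x : Fin 2) : x.rev ≠ x := by fin_cases x <;> decide
-- ### stage 6 content
lemma sing_flip_zero (p : ℕ) (v : Fin (2*p) → Fin 2) (q : Fin (2*p)) (a : Fin 2) (ha : a ≠ v q) :
    conj (sing p v) * sing p (Function.update v q a) = 0 := by
  by_cases hq : q.1 % 2 = 0
  · have hqlo : lo p (pt p q) = q := by apply Fin.ext; simp only [lo, pt]; omega
    have hne : hi p (pt p q) ≠ q := fne (by simp only [hi, pt]; omega)
    refine sing_orth v _ (pt p q) (Or.inl ⟨?_, ?_⟩)
    · rw [hqlo, Function.update_self]; exact ha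
    · rw [Function.update_of_ne hne]
  · have hqhi : hi p (pt p q) = q := by apply Fin.ext; simp only [hi, pt]; omega
    have hne : lo p (pt p q) ≠ q := fne (by simp only [lo, pt]; omega)
    refine sing_orth v _ (pt p q) (Or.inr ⟨?_, ?_⟩)
    · rw [Function.update_of_ne hne]
    · rw [hqhi, Function.update_self]; exact ha

lemma sing_flip2_zero (p : ℕ) (v : Fin (2*p) → Fin 2) (q q' : Fin (2*p)) (b : Fin 2)
    (hne : q ≠ q') (hpt : pt p q ≠ pt p q') :
    conj (sing p v) * sing p (Function.update (Function.update v q (v q).rev) q' b) = 0 := by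
  have hptv : q.1/2 ≠ q'.1/2 := fun h => hpt (Fin.ext h)
  by_cases hq : q.1 % 2 = 0
  · have hqlo : lo p (pt p q) = q := by apply Fin.ext; simp only [lo, pt]; omega
    have hne1 : hi p (pt p q) ≠ q := fne (by simp only [hi, pt]; omega)
    have hne2 : hi p (pt p q) ≠ q' := fne (by simp only [hi, pt]; omega)
    refine sing_orth v _ (pt p q) (Or.inl ⟨?_, ?_⟩)
    · rw [hqlo, Function.update_of_ne hne, Function.update_self]; exact rev_ne _
    · rw [Function.update_of_ne hne2, Function.update_of_ne hne1]
  · have hqhi : hi p (pt p q) = q := by apply Fin.ext; simp only [hi, pt]; omega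
    have hne1 : lo p (pt p q) ≠ q := fne (by simp only [lo, pt]; omega)
    have hne2 : lo p (pt p q) ≠ q' := fne (by simp only [lo, pt]; omega)
    refine sing_orth v _ (pt p q) (Or.inr ⟨?_, ?_⟩)
    · rw [Function.update_of_ne hne2, Function.update_of_ne hne1]
    · rw [hqhi, Function.update_of_ne hne, Function.update_self]; exact rev_ne _

def splitE (J p : ℕ) : ((Fin (2*J) → Fin 2) × (Fin (2*p) → Fin 2)) ≃ (Fin (2*J+2*p) → Fin 2) where
  toFun q := Fin.append q.1 q.2
  invFun f := (fun i => f (Fin.castAdd (2*p) i), fun i => f (Fin.natAdd (2*J) i))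
  left_inv q := by
    obtain ⟨u, v⟩ := q
    simp only [Prod.mk.injEq]
    constructor
    · funext i; exact Fin.append_left u v i
    · funext i; exact Fin.append_right u v i
  right_inv f := by
    funext x
    refine Fin.addCases (fun i => ?_) (fun i => ?_) x
    · exact Fin.append_left _ _ i
    · exact Fin.append_right _ _ i

lemma sum_split (J p : ℕ) (H : (Fin (2*J+2*p) → Fin 2) → ℂ) :
    ∑ f : Fin (2*J+2*p) → Fin 2, H f
      = ∑ u : Fin (2*J) → Fin 2, ∑ v : Fin (2*p) → Fin 2, H (Fin.append u v) := by
  rw [← Equiv.sum_comp (splitE J p) H, Fintype.sum_prod_type]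
  rfl

lemma ca_ne_na (J p : ℕ) (i : Fin (2*J)) (q : Fin (2*p)) :
    Fin.castAdd (2*p) i ≠ Fin.natAdd (2*J) q := by
  apply fne
  simp only [Fin.coe_castAdd, Fin.coe_natAdd]
  have := i.2; omega

lemma update_append_left (J p : ℕ) (u : Fin (2*J) → Fin 2) (v : Fin (2*p) → Fin 2)
    (i : Fin (2*J)) (a : Fin 2) :
    Function.update (Fin.append u v) (Fin.castAdd (2*p) i) a
      = Fin.append (Function.update u i a) v := by
  funext x
  refine Fin.addCases (fun j => ?_) (fun j => ?_) x
  · rw [Fin.append_left, Function.update_apply, Function.update_apply]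
    by_cases h : j = i
    · rw [if_pos (show Fin.castAdd (2*p) j = Fin.castAdd (2*p) i from by rw [h]), if_pos h]
    · rw [if_neg (show ¬ Fin.castAdd (2*p) j = Fin.castAdd (2*p) i from
        fun hc => h (Fin.ext (by simpa using congrArg Fin.val hc))), if_neg h, Fin.append_left]
  · rw [Fin.append_right, Function.update_of_ne (Ne.symm (ca_ne_na J p i j)), Fin.append_right]

lemma update_append_right (J p : ℕ) (u : Fin (2*J) → Fin 2) (v : Fin (2*p) → Fin 2)
    (q : Fin (2*p)) (a : Fin 2) :
    Function.update (Fin.append u v) (Fin.natAdd (2*J) q) a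
      = Fin.append u (Function.update v q a) := by
  funext x
  refine Fin.addCases (fun j => ?_) (fun j => ?_) x
  · rw [Function.update_of_ne (ca_ne_na J p j q), Fin.append_left, Fin.append_left]
  · rw [Fin.append_right, Function.update_apply, Function.update_apply]
    by_cases h : j = q
    · rw [if_pos (show Fin.natAdd (2*J) j = Fin.natAdd (2*J) q from by rw [h]), if_pos h]
    · rw [if_neg (show ¬ Fin.natAdd (2*J) j = Fin.natAdd (2*J) q from fun hc => h (Fin.ext (by
        have := congrArg Fin.val hc
        simp only [Fin.coe_natAdd] at this
        omega))), if_neg h, Fin.append_right]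

lemma xi_eq (J p k : ℕ) (u : Fin (2*J) → Fin 2) (v : Fin (2*p) → Fin 2) :
    xiState (2*J+2*p) J k (Fin.append u v) = dick (2*J) k u * sing p v := by
  have hcard : ((Finset.range (2*J)).filter fun m =>
      extendBits (2*J+2*p) (Fin.append u v) m = 1).card = wt u := by
    rw [Finset.card_filter, wt, Finset.card_filter,
      ← Fin.sum_univ_eq_sum_range (fun m =>
          if extendBits (2*J+2*p) (Fin.append u v) m = 1 then 1 else 0) (2*J)]
    refine Finset.sum_congr rfl fun i _ => ?_
    have hi2 : (i:ℕ) < 2*J+2*p := by have := i.2; omega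
    have : extendBits (2*J+2*p) (Fin.append u v) i = u i := by
      rw [extendBits]
      simp only [hi2, dif_pos]
      rw [show (⟨(i:ℕ), hi2⟩ : Fin (2*J+2*p)) = Fin.castAdd (2*p) i from Fin.ext rfl]
      exact Fin.append_left u v i
    rw [this]
  have hsing : (∏ a ∈ Finset.range ((2*J+2*p - 2*J) / 2),
      singletAmp (extendBits (2*J+2*p) (Fin.append u v) (2*J + 2*a))
        (extendBits (2*J+2*p) (Fin.append u v) (2*J + 2*a + 1))) = sing p v := by
    have hp : (2*J+2*p - 2*J) / 2 = p := by omega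
    rw [hp, sing, ← Fin.prod_univ_eq_prod_range (fun a =>
      singletAmp (extendBits (2*J+2*p) (Fin.append u v) (2*J + 2*a))
        (extendBits (2*J+2*p) (Fin.append u v) (2*J + 2*a + 1))) p]
    refine Finset.prod_congr rfl fun t _ => ?_
    have h1 : 2*J + 2*(t:ℕ) < 2*J+2*p := by have := t.2; omega
    have h2 : 2*J + 2*(t:ℕ) + 1 < 2*J+2*p := by have := t.2; omega
    have e1 : extendBits (2*J+2*p) (Fin.append u v) (2*J + 2*(t:ℕ)) = v (lo p t) := by
      rw [extendBits]
      simp only [h1, dif_pos]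
      rw [show (⟨2*J + 2*(t:ℕ), h1⟩ : Fin (2*J+2*p)) = Fin.natAdd (2*J) (lo p t) from Fin.ext rfl]
      exact Fin.append_right u v (lo p t)
    have e2 : extendBits (2*J+2*p) (Fin.append u v) (2*J + 2*(t:ℕ) + 1) = v (hi p t) := by
      rw [extendBits]
      simp only [h2, dif_pos]
      rw [show (⟨2*J + 2*(t:ℕ) + 1, h2⟩ : Fin (2*J+2*p)) = Fin.natAdd (2*J) (hi p t) from
        Fin.ext rfl]
      exact Fin.append_right u v (hi p t)
    rw [e1, e2]
  rw [xiState, hcard, hsing, dick]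
  rfl

lemma erase_sum_ite {α : Type} [DecidableEq α] [Fintype α] (a : α) (f : α → ℂ) :
    ∑ j ∈ Finset.univ.erase a, f j = ∑ j : α, if j = a then 0 else f j := by
  rw [← Finset.add_sum_erase Finset.univ (fun j => if j = a then 0 else f j) (Finset.mem_univ a),
    if_pos rfl, zero_add]
  exact Finset.sum_congr rfl fun j hj => (if_neg (Finset.ne_of_mem_erase hj)).symm


lemma TXZ_cc (J p k l : ℕ) (i' j' : Fin (2*J)) :
    (∑ f : Fin (2*J+2*p) → Fin 2, conj (xiState (2*J+2*p) J k f) *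
        zsgn (f (Fin.castAdd (2*p) j')) *
        xiState (2*J+2*p) J l (Function.update f (Fin.castAdd (2*p) i')
          (f (Fin.castAdd (2*p) i')).rev))
      = XZu (2*J) k l i' j' := by
  rw [sum_split J p]
  have hterm : ∀ (u : Fin (2*J) → Fin 2) (v : Fin (2*p) → Fin 2),
      conj (xiState (2*J+2*p) J k (Fin.append u v)) *
        zsgn ((Fin.append u v) (Fin.castAdd (2*p) j')) *
        xiState (2*J+2*p) J l (Function.update (Fin.append u v) (Fin.castAdd (2*p) i')
          ((Fin.append u v) (Fin.castAdd (2*p) i')).rev)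
      = (dick (2*J) k u * zsgn (u j') * dick (2*J) l (Function.update u i' (u i').rev)) *
        (conj (sing p v) * sing p v) := by
    intro u v
    rw [Fin.append_left u v i', update_append_left, xi_eq, xi_eq, Fin.append_left u v j',
      map_mul, conj_dick]
    ring
  rw [Finset.sum_congr rfl fun u _ => Finset.sum_congr rfl fun v _ => hterm u v]
  rw [Finset.sum_congr rfl fun u _ => by
    rw [← Finset.mul_sum, sum_sing_norm, mul_one]]
  rfl

lemma TXZ_cn (J p k l : ℕ) (i' : Fin (2*J)) (q : Fin (2*p)) :
    (∑ f : Fin (2*J+2*p) → Fin 2, conj (xiState (2*J+2*p) J k f) *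
        zsgn (f (Fin.natAdd (2*J) q)) *
        xiState (2*J+2*p) J l (Function.update f (Fin.castAdd (2*p) i')
          (f (Fin.castAdd (2*p) i')).rev))
      = 0 := by
  rw [sum_split J p]
  have hterm : ∀ (u : Fin (2*J) → Fin 2) (v : Fin (2*p) → Fin 2),
      conj (xiState (2*J+2*p) J k (Fin.append u v)) *
        zsgn ((Fin.append u v) (Fin.natAdd (2*J) q)) *
        xiState (2*J+2*p) J l (Function.update (Fin.append u v) (Fin.castAdd (2*p) i')
          ((Fin.append u v) (Fin.castAdd (2*p) i')).rev)
      = (dick (2*J) k u * dick (2*J) l (Function.update u i' (u i').rev)) *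
        (conj (sing p v) * zsgn (v q) * sing p v) := by
    intro u v
    rw [Fin.append_left u v i', update_append_left, xi_eq, xi_eq, Fin.append_right u v q,
      map_mul, conj_dick]
    ring
  rw [Finset.sum_congr rfl fun u _ => Finset.sum_congr rfl fun v _ => hterm u v]
  rw [Finset.sum_congr rfl fun u _ => by
    rw [← Finset.mul_sum, sum_sing_z q, mul_zero]]
  exact Finset.sum_const_zero

lemma TXZ_nx (J p k l : ℕ) (q : Fin (2*p)) (j : Fin (2*J+2*p)) :
    (∑ f : Fin (2*J+2*p) → Fin 2, conj (xiState (2*J+2*p) J k f) *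
        zsgn (f j) *
        xiState (2*J+2*p) J l (Function.update f (Fin.natAdd (2*J) q)
          (f (Fin.natAdd (2*J) q)).rev))
      = 0 := by
  rw [sum_split J p]
  have hterm : ∀ (u : Fin (2*J) → Fin 2) (v : Fin (2*p) → Fin 2),
      conj (xiState (2*J+2*p) J k (Fin.append u v)) *
        zsgn ((Fin.append u v) j) *
        xiState (2*J+2*p) J l (Function.update (Fin.append u v) (Fin.natAdd (2*J) q)
          ((Fin.append u v) (Fin.natAdd (2*J) q)).rev)
      = 0 := by
    intro u v
    rw [Fin.append_right u v q, update_append_right, xi_eq, xi_eq, map_mul, conj_dick]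
    rw [show dick (2*J) k u * conj (sing p v) * zsgn (Fin.append u v j) *
        (dick (2*J) l u * sing p (Function.update v q (v q).rev))
      = (dick (2*J) k u * zsgn (Fin.append u v j) * dick (2*J) l u) *
        (conj (sing p v) * sing p (Function.update v q (v q).rev)) from by ring]
    rw [sing_flip_zero p v q _ (rev_ne _), mul_zero]
  rw [Finset.sum_congr rfl fun u _ => Finset.sum_congr rfl fun v _ => hterm u v]
  simp

lemma final_XZ (J p k l : ℕ) (hk : k ≤ 2*J) (hl : l ≤ 2*J) :
    braket (xiState (2*J+2*p) J k) (collSS (2*J+2*p) pauliX pauliZ) (xiState (2*J+2*p) J l)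
      = ((((2 * (J : ℝ) - 1 - 2 * (l : ℝ)) : ℝ) : ℂ)) *
          (((Real.sqrt ((2 * (J : ℝ) - (l : ℝ)) * ((l : ℝ) + 1)) : ℝ) : ℂ)) *
          kdel ((k : ℤ) - (l : ℤ) - 1)
      + ((((2 * (J : ℝ) - 1 - 2 * (k : ℝ)) : ℝ) : ℂ)) *
          (((Real.sqrt ((2 * (J : ℝ) - (k : ℝ)) * ((k : ℝ) + 1)) : ℝ) : ℂ)) *
          kdel ((l : ℤ) - (k : ℤ) - 1) := by
  unfold collSS
  rw [braket_sum]
  rw [Finset.sum_congr rfl fun i _ => braket_sum _ _ _ _]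
  rw [Finset.sum_congr rfl fun i _ => Finset.sum_congr rfl fun j hj =>
    braket_XZ i j (Ne.symm (Finset.mem_erase.mp hj).1) _ _]
  set T : Fin (2*J+2*p) → Fin (2*J+2*p) → ℂ := fun i j =>
    ∑ f : Fin (2*J+2*p) → Fin 2, conj (xiState (2*J+2*p) J k f) * zsgn (f j) *
      xiState (2*J+2*p) J l (Function.update f i (f i).rev) with hT
  rw [Finset.sum_congr rfl fun i _ => erase_sum_ite i (T i)]
  rw [Fin.sum_univ_add (f := fun i => ∑ j, if j = i then 0 else T i j)]
  rw [Finset.sum_congr rfl fun i' _ =>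
    Fin.sum_univ_add (f := fun j => if j = Fin.castAdd (2*p) i' then 0 else T (Fin.castAdd (2*p) i') j)]
  rw [Finset.sum_congr rfl fun q _ =>
    Fin.sum_univ_add (f := fun j => if j = Fin.natAdd (2*J) q then 0 else T (Fin.natAdd (2*J) q) j)]
  have P11 : ∀ i' : Fin (2*J), (∑ j' : Fin (2*J),
      if Fin.castAdd (2*p) j' = Fin.castAdd (2*p) i' then 0
      else T (Fin.castAdd (2*p) i') (Fin.castAdd (2*p) j'))
      = ∑ j' ∈ Finset.univ.erase i', XZu (2*J) k l i' j' := by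
    intro i'
    rw [erase_sum_ite i' (XZu (2*J) k l i')]
    refine Finset.sum_congr rfl fun j' _ => ?_
    by_cases h : j' = i'
    · rw [if_pos (by rw [h]), if_pos h]
    · rw [if_neg (fun hc => h (Fin.ext (by simpa using congrArg Fin.val hc))), if_neg h,
        hT]
      exact TXZ_cc J p k l i' j'
  have P12 : ∀ i' : Fin (2*J), (∑ q : Fin (2*p),
      if Fin.natAdd (2*J) q = Fin.castAdd (2*p) i' then 0
      else T (Fin.castAdd (2*p) i') (Fin.natAdd (2*J) q)) = 0 := by
    intro i'
    refine Finset.sum_eq_zero fun q _ => ?_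
    rw [if_neg (Ne.symm (ca_ne_na J p i' q))]
    exact TXZ_cn J p k l i' q
  have P21 : ∀ q : Fin (2*p), (∑ j' : Fin (2*J),
      if Fin.castAdd (2*p) j' = Fin.natAdd (2*J) q then 0
      else T (Fin.natAdd (2*J) q) (Fin.castAdd (2*p) j')) = 0 := by
    intro q
    refine Finset.sum_eq_zero fun j' _ => ?_
    rw [if_neg (ca_ne_na J p j' q)]
    exact TXZ_nx J p k l q _
  have P22 : ∀ q : Fin (2*p), (∑ q' : Fin (2*p),
      if Fin.natAdd (2*J) q' = Fin.natAdd (2*J) q then 0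
      else T (Fin.natAdd (2*J) q) (Fin.natAdd (2*J) q')) = 0 := by
    intro q
    refine Finset.sum_eq_zero fun q' _ => ?_
    by_cases h : q' = q
    · rw [if_pos (by rw [h])]
    · rw [if_neg (fun hc => h (Fin.ext (by
        have := congrArg Fin.val hc
        simp only [Fin.coe_natAdd] at this
        omega)))]
      exact TXZ_nx J p k l q _
  rw [Finset.sum_congr rfl fun i' _ => congrArg₂ (· + ·) (P11 i') (P12 i'),
    Finset.sum_congr rfl fun q _ => congrArg₂ (· + ·) (P21 q) (P22 q)]
  simp only [add_zero]
  rw [Finset.sum_const_zero, add_zero, main_XZ (2*J) k l hk hl]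
  rw [show (2 * (J:ℝ)) = ((2*J : ℕ) : ℝ) from by push_cast; ring]


lemma TYZ_cc (J p k l : ℕ) (i' j' : Fin (2*J)) :
    (∑ f : Fin (2*J+2*p) → Fin 2, conj (xiState (2*J+2*p) J k f) *
        (-Complex.I * zsgn (f (Fin.castAdd (2*p) i')) * zsgn (f (Fin.castAdd (2*p) j'))) *
        xiState (2*J+2*p) J l (Function.update f (Fin.castAdd (2*p) i')
          (f (Fin.castAdd (2*p) i')).rev))
      = YZu (2*J) k l i' j' := by
  rw [sum_split J p]
  have hterm : ∀ (u : Fin (2*J) → Fin 2) (v : Fin (2*p) → Fin 2),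
      conj (xiState (2*J+2*p) J k (Fin.append u v)) *
        (-Complex.I * zsgn ((Fin.append u v) (Fin.castAdd (2*p) i')) *
          zsgn ((Fin.append u v) (Fin.castAdd (2*p) j'))) *
        xiState (2*J+2*p) J l (Function.update (Fin.append u v) (Fin.castAdd (2*p) i')
          ((Fin.append u v) (Fin.castAdd (2*p) i')).rev)
      = (dick (2*J) k u * (-Complex.I * zsgn (u i') * zsgn (u j')) *
          dick (2*J) l (Function.update u i' (u i').rev)) *
        (conj (sing p v) * sing p v) := by
    intro u v
    rw [Fin.append_left u v i', update_append_left, xi_eq, xi_eq, Fin.append_left u v j',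
      map_mul, conj_dick]
    ring
  rw [Finset.sum_congr rfl fun u _ => Finset.sum_congr rfl fun v _ => hterm u v]
  rw [Finset.sum_congr rfl fun u _ => by
    rw [← Finset.mul_sum, sum_sing_norm, mul_one]]
  rfl

lemma TYZ_cn (J p k l : ℕ) (i' : Fin (2*J)) (q : Fin (2*p)) :
    (∑ f : Fin (2*J+2*p) → Fin 2, conj (xiState (2*J+2*p) J k f) *
        (-Complex.I * zsgn (f (Fin.castAdd (2*p) i')) * zsgn (f (Fin.natAdd (2*J) q))) *
        xiState (2*J+2*p) J l (Function.update f (Fin.castAdd (2*p) i')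
          (f (Fin.castAdd (2*p) i')).rev))
      = 0 := by
  rw [sum_split J p]
  have hterm : ∀ (u : Fin (2*J) → Fin 2) (v : Fin (2*p) → Fin 2),
      conj (xiState (2*J+2*p) J k (Fin.append u v)) *
        (-Complex.I * zsgn ((Fin.append u v) (Fin.castAdd (2*p) i')) *
          zsgn ((Fin.append u v) (Fin.natAdd (2*J) q))) *
        xiState (2*J+2*p) J l (Function.update (Fin.append u v) (Fin.castAdd (2*p) i')
          ((Fin.append u v) (Fin.castAdd (2*p) i')).rev)
      = (dick (2*J) k u * (-Complex.I * zsgn (u i')) *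
          dick (2*J) l (Function.update u i' (u i').rev)) *
        (conj (sing p v) * zsgn (v q) * sing p v) := by
    intro u v
    rw [Fin.append_left u v i', update_append_left, xi_eq, xi_eq, Fin.append_right u v q,
      map_mul, conj_dick]
    ring
  rw [Finset.sum_congr rfl fun u _ => Finset.sum_congr rfl fun v _ => hterm u v]
  rw [Finset.sum_congr rfl fun u _ => by
    rw [← Finset.mul_sum, sum_sing_z q, mul_zero]]
  exact Finset.sum_const_zero

lemma TYZ_nx (J p k l : ℕ) (q : Fin (2*p)) (j : Fin (2*J+2*p)) :
    (∑ f : Fin (2*J+2*p) → Fin 2, conj (xiState (2*J+2*p) J k f) *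
        (-Complex.I * zsgn (f (Fin.natAdd (2*J) q)) * zsgn (f j)) *
        xiState (2*J+2*p) J l (Function.update f (Fin.natAdd (2*J) q)
          (f (Fin.natAdd (2*J) q)).rev))
      = 0 := by
  rw [sum_split J p]
  have hterm : ∀ (u : Fin (2*J) → Fin 2) (v : Fin (2*p) → Fin 2),
      conj (xiState (2*J+2*p) J k (Fin.append u v)) *
        (-Complex.I * zsgn ((Fin.append u v) (Fin.natAdd (2*J) q)) *
          zsgn ((Fin.append u v) j)) *
        xiState (2*J+2*p) J l (Function.update (Fin.append u v) (Fin.natAdd (2*J) q)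
          ((Fin.append u v) (Fin.natAdd (2*J) q)).rev)
      = 0 := by
    intro u v
    rw [Fin.append_right u v q, update_append_right, xi_eq, xi_eq, map_mul, conj_dick]
    rw [show dick (2*J) k u * conj (sing p v) *
        (-Complex.I * zsgn (v q) * zsgn (Fin.append u v j)) *
        (dick (2*J) l u * sing p (Function.update v q (v q).rev))
      = (dick (2*J) k u * (-Complex.I * zsgn (v q) * zsgn (Fin.append u v j)) * dick (2*J) l u) *
        (conj (sing p v) * sing p (Function.update v q (v q).rev)) from by ring]
    rw [sing_flip_zero p v q _ (rev_ne _), mul_zero]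
  rw [Finset.sum_congr rfl fun u _ => Finset.sum_congr rfl fun v _ => hterm u v]
  simp

lemma final_YZ (J p k l : ℕ) (hk : k ≤ 2*J) (hl : l ≤ 2*J) :
    braket (xiState (2*J+2*p) J k) (collSS (2*J+2*p) pauliY pauliZ) (xiState (2*J+2*p) J l)
      = Complex.I * ((((k : ℤ) - (l : ℤ)).sign : ℤ) : ℂ) *
        (((((2 * (J : ℝ) - 1 - 2 * (l : ℝ)) : ℝ) : ℂ)) *
          (((Real.sqrt ((2 * (J : ℝ) - (l : ℝ)) * ((l : ℝ) + 1)) : ℝ) : ℂ)) *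
          kdel ((k : ℤ) - (l : ℤ) - 1)
        + ((((2 * (J : ℝ) - 1 - 2 * (k : ℝ)) : ℝ) : ℂ)) *
          (((Real.sqrt ((2 * (J : ℝ) - (k : ℝ)) * ((k : ℝ) + 1)) : ℝ) : ℂ)) *
          kdel ((l : ℤ) - (k : ℤ) - 1)) := by
  unfold collSS
  rw [braket_sum]
  rw [Finset.sum_congr rfl fun i _ => braket_sum _ _ _ _]
  rw [Finset.sum_congr rfl fun i _ => Finset.sum_congr rfl fun j hj =>
    braket_YZ i j (Ne.symm (Finset.mem_erase.mp hj).1) _ _]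
  set T : Fin (2*J+2*p) → Fin (2*J+2*p) → ℂ := fun i j =>
    ∑ f : Fin (2*J+2*p) → Fin 2, conj (xiState (2*J+2*p) J k f) *
      (-Complex.I * zsgn (f i) * zsgn (f j)) *
      xiState (2*J+2*p) J l (Function.update f i (f i).rev) with hT
  rw [Finset.sum_congr rfl fun i _ => erase_sum_ite i (T i)]
  rw [Fin.sum_univ_add (f := fun i => ∑ j, if j = i then 0 else T i j)]
  rw [Finset.sum_congr rfl fun i' _ =>
    Fin.sum_univ_add (f := fun j => if j = Fin.castAdd (2*p) i' then 0 else T (Fin.castAdd (2*p) i') j)]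
  rw [Finset.sum_congr rfl fun q _ =>
    Fin.sum_univ_add (f := fun j => if j = Fin.natAdd (2*J) q then 0 else T (Fin.natAdd (2*J) q) j)]
  have P11 : ∀ i' : Fin (2*J), (∑ j' : Fin (2*J),
      if Fin.castAdd (2*p) j' = Fin.castAdd (2*p) i' then 0
      else T (Fin.castAdd (2*p) i') (Fin.castAdd (2*p) j'))
      = ∑ j' ∈ Finset.univ.erase i', YZu (2*J) k l i' j' := by
    intro i'
    rw [erase_sum_ite i' (YZu (2*J) k l i')]
    refine Finset.sum_congr rfl fun j' _ => ?_
    by_cases h : j' = i'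
    · rw [if_pos (by rw [h]), if_pos h]
    · rw [if_neg (fun hc => h (Fin.ext (by simpa using congrArg Fin.val hc))), if_neg h, hT]
      exact TYZ_cc J p k l i' j'
  have P12 : ∀ i' : Fin (2*J), (∑ q : Fin (2*p),
      if Fin.natAdd (2*J) q = Fin.castAdd (2*p) i' then 0
      else T (Fin.castAdd (2*p) i') (Fin.natAdd (2*J) q)) = 0 := by
    intro i'
    refine Finset.sum_eq_zero fun q _ => ?_
    rw [if_neg (Ne.symm (ca_ne_na J p i' q))]
    exact TYZ_cn J p k l i' q
  have P21 : ∀ q : Fin (2*p), (∑ j' : Fin (2*J),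
      if Fin.castAdd (2*p) j' = Fin.natAdd (2*J) q then 0
      else T (Fin.natAdd (2*J) q) (Fin.castAdd (2*p) j')) = 0 := by
    intro q
    refine Finset.sum_eq_zero fun j' _ => ?_
    rw [if_neg (ca_ne_na J p j' q)]
    exact TYZ_nx J p k l q _
  have P22 : ∀ q : Fin (2*p), (∑ q' : Fin (2*p),
      if Fin.natAdd (2*J) q' = Fin.natAdd (2*J) q then 0
      else T (Fin.natAdd (2*J) q) (Fin.natAdd (2*J) q')) = 0 := by
    intro q
    refine Finset.sum_eq_zero fun q' _ => ?_
    by_cases h : q' = q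
    · rw [if_pos (by rw [h])]
    · rw [if_neg (fun hc => h (Fin.ext (by
        have := congrArg Fin.val hc
        simp only [Fin.coe_natAdd] at this
        omega)))]
      exact TYZ_nx J p k l q _
  rw [Finset.sum_congr rfl fun i' _ => congrArg₂ (· + ·) (P11 i') (P12 i'),
    Finset.sum_congr rfl fun q _ => congrArg₂ (· + ·) (P21 q) (P22 q)]
  simp only [add_zero]
  rw [Finset.sum_const_zero, add_zero, main_YZ (2*J) k l hk hl]
  rw [show (2 * (J:ℝ)) = ((2*J : ℕ) : ℝ) from by push_cast; ring]


lemma TXY_cc (J p k l : ℕ) (i' j' : Fin (2*J)) :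
    (∑ f : Fin (2*J+2*p) → Fin 2, conj (xiState (2*J+2*p) J k f) *
        (-Complex.I * zsgn (f (Fin.castAdd (2*p) j'))) *
        xiState (2*J+2*p) J l (Function.update
          (Function.update f (Fin.castAdd (2*p) i') (f (Fin.castAdd (2*p) i')).rev)
          (Fin.castAdd (2*p) j') (f (Fin.castAdd (2*p) j')).rev))
      = XYu (2*J) k l i' j' := by
  rw [sum_split J p]
  have hterm : ∀ (u : Fin (2*J) → Fin 2) (v : Fin (2*p) → Fin 2),
      conj (xiState (2*J+2*p) J k (Fin.append u v)) *
        (-Complex.I * zsgn ((Fin.append u v) (Fin.castAdd (2*p) j'))) *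
        xiState (2*J+2*p) J l (Function.update
          (Function.update (Fin.append u v) (Fin.castAdd (2*p) i')
            ((Fin.append u v) (Fin.castAdd (2*p) i')).rev)
          (Fin.castAdd (2*p) j') ((Fin.append u v) (Fin.castAdd (2*p) j')).rev)
      = (dick (2*J) k u * (-Complex.I * zsgn (u j')) *
          dick (2*J) l (Function.update (Function.update u i' (u i').rev) j' (u j').rev)) *
        (conj (sing p v) * sing p v) := by
    intro u v
    rw [Fin.append_left u v i', Fin.append_left u v j', update_append_left, update_append_left,
      xi_eq, xi_eq, map_mul, conj_dick]
    ring
  rw [Finset.sum_congr rfl fun u _ => Finset.sum_congr rfl fun v _ => hterm u v]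
  rw [Finset.sum_congr rfl fun u _ => by
    rw [← Finset.mul_sum, sum_sing_norm, mul_one]]
  rfl

lemma TXY_cn (J p k l : ℕ) (i' : Fin (2*J)) (q : Fin (2*p)) :
    (∑ f : Fin (2*J+2*p) → Fin 2, conj (xiState (2*J+2*p) J k f) *
        (-Complex.I * zsgn (f (Fin.natAdd (2*J) q))) *
        xiState (2*J+2*p) J l (Function.update
          (Function.update f (Fin.castAdd (2*p) i') (f (Fin.castAdd (2*p) i')).rev)
          (Fin.natAdd (2*J) q) (f (Fin.natAdd (2*J) q)).rev))
      = 0 := by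
  rw [sum_split J p]
  have hterm : ∀ (u : Fin (2*J) → Fin 2) (v : Fin (2*p) → Fin 2),
      conj (xiState (2*J+2*p) J k (Fin.append u v)) *
        (-Complex.I * zsgn ((Fin.append u v) (Fin.natAdd (2*J) q))) *
        xiState (2*J+2*p) J l (Function.update
          (Function.update (Fin.append u v) (Fin.castAdd (2*p) i')
            ((Fin.append u v) (Fin.castAdd (2*p) i')).rev)
          (Fin.natAdd (2*J) q) ((Fin.append u v) (Fin.natAdd (2*J) q)).rev)
      = 0 := by
    intro u v
    rw [Fin.append_left u v i', Fin.append_right u v q, update_append_left, update_append_right,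
      xi_eq, xi_eq, map_mul, conj_dick]
    rw [show dick (2*J) k u * conj (sing p v) * (-Complex.I * zsgn (v q)) *
        (dick (2*J) l (Function.update u i' (u i').rev) *
          sing p (Function.update v q (v q).rev))
      = (dick (2*J) k u * (-Complex.I * zsgn (v q)) *
          dick (2*J) l (Function.update u i' (u i').rev)) *
        (conj (sing p v) * sing p (Function.update v q (v q).rev)) from by ring]
    rw [sing_flip_zero p v q _ (rev_ne _), mul_zero]
  rw [Finset.sum_congr rfl fun u _ => Finset.sum_congr rfl fun v _ => hterm u v]
  simp

lemma TXY_nc (J p k l : ℕ) (q : Fin (2*p)) (j' : Fin (2*J)) :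
    (∑ f : Fin (2*J+2*p) → Fin 2, conj (xiState (2*J+2*p) J k f) *
        (-Complex.I * zsgn (f (Fin.castAdd (2*p) j'))) *
        xiState (2*J+2*p) J l (Function.update
          (Function.update f (Fin.natAdd (2*J) q) (f (Fin.natAdd (2*J) q)).rev)
          (Fin.castAdd (2*p) j') (f (Fin.castAdd (2*p) j')).rev))
      = 0 := by
  rw [sum_split J p]
  have hterm : ∀ (u : Fin (2*J) → Fin 2) (v : Fin (2*p) → Fin 2),
      conj (xiState (2*J+2*p) J k (Fin.append u v)) *
        (-Complex.I * zsgn ((Fin.append u v) (Fin.castAdd (2*p) j'))) *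
        xiState (2*J+2*p) J l (Function.update
          (Function.update (Fin.append u v) (Fin.natAdd (2*J) q)
            ((Fin.append u v) (Fin.natAdd (2*J) q)).rev)
          (Fin.castAdd (2*p) j') ((Fin.append u v) (Fin.castAdd (2*p) j')).rev)
      = 0 := by
    intro u v
    rw [Fin.append_right u v q, Fin.append_left u v j', update_append_right, update_append_left,
      xi_eq, xi_eq, map_mul, conj_dick]
    rw [show dick (2*J) k u * conj (sing p v) * (-Complex.I * zsgn (u j')) *
        (dick (2*J) l (Function.update u j' (u j').rev) *
          sing p (Function.update v q (v q).rev))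
      = (dick (2*J) k u * (-Complex.I * zsgn (u j')) *
          dick (2*J) l (Function.update u j' (u j').rev)) *
        (conj (sing p v) * sing p (Function.update v q (v q).rev)) from by ring]
    rw [sing_flip_zero p v q _ (rev_ne _), mul_zero]
  rw [Finset.sum_congr rfl fun u _ => Finset.sum_congr rfl fun v _ => hterm u v]
  simp

lemma TXY_nn (J p k l : ℕ) (q q' : Fin (2*p)) (hne : q ≠ q') :
    (∑ f : Fin (2*J+2*p) → Fin 2, conj (xiState (2*J+2*p) J k f) *
        (-Complex.I * zsgn (f (Fin.natAdd (2*J) q'))) *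
        xiState (2*J+2*p) J l (Function.update
          (Function.update f (Fin.natAdd (2*J) q) (f (Fin.natAdd (2*J) q)).rev)
          (Fin.natAdd (2*J) q') (f (Fin.natAdd (2*J) q')).rev))
      = 0 := by
  rw [sum_split J p]
  have hterm : ∀ (u : Fin (2*J) → Fin 2) (v : Fin (2*p) → Fin 2),
      conj (xiState (2*J+2*p) J k (Fin.append u v)) *
        (-Complex.I * zsgn ((Fin.append u v) (Fin.natAdd (2*J) q'))) *
        xiState (2*J+2*p) J l (Function.update
          (Function.update (Fin.append u v) (Fin.natAdd (2*J) q)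
            ((Fin.append u v) (Fin.natAdd (2*J) q)).rev)
          (Fin.natAdd (2*J) q') ((Fin.append u v) (Fin.natAdd (2*J) q')).rev)
      = (dick (2*J) k u * (-Complex.I) * dick (2*J) l u) *
        (conj (sing p v) * zsgn (v q') *
          sing p (Function.update (Function.update v q (v q).rev) q' (v q').rev)) := by
    intro u v
    rw [Fin.append_right u v q, Fin.append_right u v q', update_append_right, update_append_right,
      xi_eq, xi_eq, map_mul, conj_dick]
    ring
  rw [Finset.sum_congr rfl fun u _ => Finset.sum_congr rfl fun v _ => hterm u v]
  by_cases hpt : pt p q = pt p q'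
  · rw [Finset.sum_congr rfl fun u _ => by
      rw [← Finset.mul_sum, sum_sing_xy q q' hne hpt, mul_zero]]
    exact Finset.sum_const_zero
  · rw [Finset.sum_congr rfl fun u _ => Finset.sum_congr rfl fun v _ => by
      rw [show conj (sing p v) * zsgn (v q') *
          sing p (Function.update (Function.update v q (v q).rev) q' (v q').rev)
        = zsgn (v q') * (conj (sing p v) *
          sing p (Function.update (Function.update v q (v q).rev) q' (v q').rev)) from by ring,
        sing_flip2_zero p v q q' _ hne hpt, mul_zero, mul_zero]]
    simp

lemma final_XY (J p k l : ℕ) (hk : k ≤ 2*J) (hl : l ≤ 2*J) :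
    braket (xiState (2*J+2*p) J k) (collSS (2*J+2*p) pauliX pauliY) (xiState (2*J+2*p) J l)
      = Complex.I * ((((k : ℤ) - (l : ℤ)).sign : ℤ) : ℂ) *
        ((((Real.sqrt (((l : ℝ) + 1) * ((l : ℝ) + 2) * (2 * (J : ℝ) - (l : ℝ)) *
            (2 * (J : ℝ) - (l : ℝ) - 1)) : ℝ) : ℂ)) * kdel ((k : ℤ) - (l : ℤ) - 2)
          + (((Real.sqrt (((k : ℝ) + 1) * ((k : ℝ) + 2) * (2 * (J : ℝ) - (k : ℝ)) *
            (2 * (J : ℝ) - (k : ℝ) - 1)) : ℝ) : ℂ)) * kdel ((l : ℤ) - (k : ℤ) - 2)) := by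
  unfold collSS
  rw [braket_sum]
  rw [Finset.sum_congr rfl fun i _ => braket_sum _ _ _ _]
  rw [Finset.sum_congr rfl fun i _ => Finset.sum_congr rfl fun j hj =>
    braket_XY i j (Ne.symm (Finset.mem_erase.mp hj).1) _ _]
  set T : Fin (2*J+2*p) → Fin (2*J+2*p) → ℂ := fun i j =>
    ∑ f : Fin (2*J+2*p) → Fin 2, conj (xiState (2*J+2*p) J k f) *
      (-Complex.I * zsgn (f j)) *
      xiState (2*J+2*p) J l (Function.update (Function.update f i (f i).rev) j (f j).rev) with hT
  rw [Finset.sum_congr rfl fun i _ => erase_sum_ite i (T i)]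
  rw [Fin.sum_univ_add (f := fun i => ∑ j, if j = i then 0 else T i j)]
  rw [Finset.sum_congr rfl fun i' _ =>
    Fin.sum_univ_add (f := fun j => if j = Fin.castAdd (2*p) i' then 0 else T (Fin.castAdd (2*p) i') j)]
  rw [Finset.sum_congr rfl fun q _ =>
    Fin.sum_univ_add (f := fun j => if j = Fin.natAdd (2*J) q then 0 else T (Fin.natAdd (2*J) q) j)]
  have P11 : ∀ i' : Fin (2*J), (∑ j' : Fin (2*J),
      if Fin.castAdd (2*p) j' = Fin.castAdd (2*p) i' then 0
      else T (Fin.castAdd (2*p) i') (Fin.castAdd (2*p) j'))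
      = ∑ j' ∈ Finset.univ.erase i', XYu (2*J) k l i' j' := by
    intro i'
    rw [erase_sum_ite i' (XYu (2*J) k l i')]
    refine Finset.sum_congr rfl fun j' _ => ?_
    by_cases h : j' = i'
    · rw [if_pos (by rw [h]), if_pos h]
    · rw [if_neg (fun hc => h (Fin.ext (by simpa using congrArg Fin.val hc))), if_neg h, hT]
      exact TXY_cc J p k l i' j'
  have P12 : ∀ i' : Fin (2*J), (∑ q : Fin (2*p),
      if Fin.natAdd (2*J) q = Fin.castAdd (2*p) i' then 0
      else T (Fin.castAdd (2*p) i') (Fin.natAdd (2*J) q)) = 0 := by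
    intro i'
    refine Finset.sum_eq_zero fun q _ => ?_
    rw [if_neg (Ne.symm (ca_ne_na J p i' q))]
    exact TXY_cn J p k l i' q
  have P21 : ∀ q : Fin (2*p), (∑ j' : Fin (2*J),
      if Fin.castAdd (2*p) j' = Fin.natAdd (2*J) q then 0
      else T (Fin.natAdd (2*J) q) (Fin.castAdd (2*p) j')) = 0 := by
    intro q
    refine Finset.sum_eq_zero fun j' _ => ?_
    rw [if_neg (ca_ne_na J p j' q)]
    exact TXY_nc J p k l q j'
  have P22 : ∀ q : Fin (2*p), (∑ q' : Fin (2*p),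
      if Fin.natAdd (2*J) q' = Fin.natAdd (2*J) q then 0
      else T (Fin.natAdd (2*J) q) (Fin.natAdd (2*J) q')) = 0 := by
    intro q
    refine Finset.sum_eq_zero fun q' _ => ?_
    by_cases h : q' = q
    · rw [if_pos (by rw [h])]
    · rw [if_neg (fun hc => h (Fin.ext (by
        have := congrArg Fin.val hc
        simp only [Fin.coe_natAdd] at this
        omega)))]
      exact TXY_nn J p k l q q' (fun hc => h (hc.symm)) 
  rw [Finset.sum_congr rfl fun i' _ => congrArg₂ (· + ·) (P11 i') (P12 i'),
    Finset.sum_congr rfl fun q _ => congrArg₂ (· + ·) (P21 q) (P22 q)]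
  simp only [add_zero]
  rw [Finset.sum_const_zero, add_zero, main_XY (2*J) k l hk hl]
  rw [show (2 * (J:ℝ)) = ((2*J : ℕ) : ℝ) from by push_cast; ring]


end S9

/-- Matrix elements of the collective operators `S_{xz}`, `S_{yz}`, `S_{xy}` in the basis
`|ξ_{k,J}⟩ = |D^k_{2J}⟩ ⊗ |ψ⁻⟩^{⊗(n−2J)/2}`. -/
theorem stmt_9 (n J : ℕ) (hn : 1 ≤ n) (hJ : 2 * J ≤ n) (hpar : (n - 2 * J) % 2 = 0)
    (k l : ℕ) (hk : k ≤ 2 * J) (hl : l ≤ 2 * J) :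
    braket (xiState n J k) (collSS n pauliX pauliZ) (xiState n J l)
      = ((((2 * (J : ℝ) - 1 - 2 * (l : ℝ)) : ℝ) : ℂ)) * (((Real.sqrt ((2 * (J : ℝ) - (l : ℝ)) * ((l : ℝ) + 1)) : ℝ) : ℂ)) * kdel ((k : ℤ) - (l : ℤ) - 1) + ((((2 * (J : ℝ) - 1 - 2 * (k : ℝ)) : ℝ) : ℂ)) * (((Real.sqrt ((2 * (J : ℝ) - (k : ℝ)) * ((k : ℝ) + 1)) : ℝ) : ℂ)) * kdel ((l : ℤ) - (k : ℤ) - 1)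
    ∧ braket (xiState n J k) (collSS n pauliY pauliZ) (xiState n J l)
      = Complex.I * ((((k : ℤ) - (l : ℤ)).sign : ℤ) : ℂ) * (((((2 * (J : ℝ) - 1 - 2 * (l : ℝ)) : ℝ) : ℂ)) * (((Real.sqrt ((2 * (J : ℝ) - (l : ℝ)) * ((l : ℝ) + 1)) : ℝ) : ℂ)) * kdel ((k : ℤ) - (l : ℤ) - 1) + ((((2 * (J : ℝ) - 1 - 2 * (k : ℝ)) : ℝ) : ℂ)) * (((Real.sqrt ((2 * (J : ℝ) - (k : ℝ)) * ((k : ℝ) + 1)) : ℝ) : ℂ)) * kdel ((l : ℤ) - (k : ℤ) - 1))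
    ∧ braket (xiState n J k) (collSS n pauliX pauliY) (xiState n J l)
      = Complex.I * ((((k : ℤ) - (l : ℤ)).sign : ℤ) : ℂ)
          * ((((Real.sqrt (((l : ℝ) + 1) * ((l : ℝ) + 2) * (2 * (J : ℝ) - (l : ℝ)) * (2 * (J : ℝ) - (l : ℝ) - 1)) : ℝ) : ℂ)) * kdel ((k : ℤ) - (l : ℤ) - 2)
            + (((Real.sqrt (((k : ℝ) + 1) * ((k : ℝ) + 2) * (2 * (J : ℝ) - (k : ℝ)) * (2 * (J : ℝ) - (k : ℝ) - 1)) : ℝ) : ℂ)) * kdel ((l : ℤ) - (k : ℤ) - 2)) := by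
  obtain ⟨p, rfl⟩ : ∃ p, n = 2*J + 2*p := ⟨(n - 2*J)/2, by omega⟩
  exact ⟨S9.final_XZ J p k l hk hl, S9.final_YZ J p k l hk hl, S9.final_XY J p k l hk hl⟩
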